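/- arXiv:1008.4811 — 6 statements merged into one kernel-verified Lean document; each statement's English description precedes it below -/
import Mathlib

section
/- Let H be a separable Hilbert space and let 𝒞 be a family of closed subspaces of H. For a finite set F ⊆ H and an l-tuple 𝐕 = (V₁,…,V_l) of subspaces from 𝒞, let e(F,𝐕) = Σ_{f∈F} min_{1≤j≤l} dist(f,V_j)². Then the following are equivalent: (i) for every l ≥ 1 and every finite set F ⊆ H there exists an l-tuple 𝐕° = (V°₁,…,V°_l) ∈ 𝒞^l with e(F,𝐕°) = inf{e(F,𝐕) : 𝐕 ∈ 𝒞^l}; (ii) for every finite set F ⊆ H there exists V° ∈ 𝒞 with Σ_{f∈F} dist(f,V°)² = inf_{V∈𝒞} Σ_{f∈F} dist(f,V)². -/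
open Metric

/-- For a family `C` of closed subspaces of a separable Hilbert space `H`,
the non-linear least squares subspace approximation problem has a minimizing `l`-tuple of
subspaces from `C` for every `l ≥ 1` and every finite data set `F ⊆ H` if and only if it has a
minimizing single subspace for every finite data set `F ⊆ H`. -/
theorem existence_for_all_tuples_iff_existence_for_one
    {H : Type*} [NormedAddCommGroup H] [InnerProductSpace ℂ H] [CompleteSpace H]
    [TopologicalSpace.SeparableSpace H]
    (C : Set (Submodule ℂ H)) (hCne : C.Nonempty)
    (hCclosed : ∀ V ∈ C, IsClosed (V : Set H)) :
    (∀ l : ℕ, 1 ≤ l → ∀ F : Finset H,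
      ∃ V : Fin l → Submodule ℂ H, (∀ j, V j ∈ C) ∧
        (∑ f ∈ F, ⨅ j : Fin l, infDist f (V j : Set H) ^ 2) =
          ⨅ W : {W : Fin l → Submodule ℂ H // ∀ j, W j ∈ C},
            ∑ f ∈ F, ⨅ j : Fin l, infDist f ((W : Fin l → Submodule ℂ H) j : Set H) ^ 2)
    ↔
    (∀ F : Finset H,
      ∃ V ∈ C, (∑ f ∈ F, infDist f (V : Set H) ^ 2) =
        ⨅ W : C, ∑ f ∈ F, infDist f ((W : Submodule ℂ H) : Set H) ^ 2) := by
  classical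
  have hCne' : Nonempty C := hCne.to_subtype
  constructor
  · -- (i) → (ii): take l = 1
    intro h F
    obtain ⟨V, hV, heq⟩ := h 1 le_rfl F
    refine ⟨V 0, hV 0, ?_⟩
    have e1 : ∀ (W : Submodule ℂ H) (f : H),
        (⨅ j : Fin 1, infDist f ((fun _ : Fin 1 => W) j : Set H) ^ 2)
          = infDist f (W : Set H) ^ 2 := by
      intro W f
      exact ciInf_const
    have e2 : ∀ f : H, (⨅ j : Fin 1, infDist f (V j : Set H) ^ 2)
        = infDist f (V 0 : Set H) ^ 2 := by
      intro f
      have : (fun j : Fin 1 => infDist f (V j : Set H) ^ 2)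
          = fun _ : Fin 1 => infDist f (V 0 : Set H) ^ 2 := by
        funext j
        have : j = 0 := Subsingleton.elim _ _
        rw [this]
      rw [this]
      exact ciInf_const
    have hLHS : (∑ f ∈ F, ⨅ j : Fin 1, infDist f (V j : Set H) ^ 2)
        = ∑ f ∈ F, infDist f (V 0 : Set H) ^ 2 :=
      Finset.sum_congr rfl fun f _ => e2 f
    rw [hLHS] at heq
    rw [heq]
    -- show the two infima agree
    have hbdd1 : BddBelow (Set.range fun W : {W : Fin 1 → Submodule ℂ H // ∀ j, W j ∈ C} =>
        ∑ f ∈ F, ⨅ j : Fin 1, infDist f ((W : Fin 1 → Submodule ℂ H) j : Set H) ^ 2) := by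
      refine ⟨0, ?_⟩
      rintro x ⟨W, rfl⟩
      exact Finset.sum_nonneg fun f _ => Real.iInf_nonneg fun j => sq_nonneg _
    have hbdd2 : BddBelow (Set.range fun W : C =>
        ∑ f ∈ F, infDist f ((W : Submodule ℂ H) : Set H) ^ 2) := by
      refine ⟨0, ?_⟩
      rintro x ⟨W, rfl⟩
      exact Finset.sum_nonneg fun f _ => sq_nonneg _
    have hne1 : Nonempty {W : Fin 1 → Submodule ℂ H // ∀ j, W j ∈ C} :=
      ⟨⟨fun _ => hCne.choose, fun _ => hCne.choose_spec⟩⟩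
    apply le_antisymm
    · refine le_ciInf fun W => ?_
      have := ciInf_le hbdd1 (⟨fun _ => (W : Submodule ℂ H), fun _ => W.2⟩ :
        {W : Fin 1 → Submodule ℂ H // ∀ j, W j ∈ C})
      refine this.trans_eq ?_
      exact Finset.sum_congr rfl fun f _ => e1 _ f
    · refine le_ciInf fun W => ?_
      have h0 : ∀ j, (W : Fin 1 → Submodule ℂ H) j ∈ C := W.2
      have := ciInf_le hbdd2 (⟨(W : Fin 1 → Submodule ℂ H) 0, h0 0⟩ : C)
      refine this.trans ?_
      refine Finset.sum_le_sum fun f _ => ?_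
      have hb : BddBelow (Set.range fun j : Fin 1 =>
          infDist f ((W : Fin 1 → Submodule ℂ H) j : Set H) ^ 2) := by
        refine ⟨0, ?_⟩; rintro x ⟨j, rfl⟩; exact sq_nonneg _
      exact le_ciInf fun j => by rw [Subsingleton.elim j (0 : Fin 1)]
  · -- (ii) → (i)
    intro h l hl F
    have hlne : Nonempty (Fin l) := ⟨⟨0, hl⟩⟩
    -- choose an optimal single subspace for each finite set
    choose optV optVmem optVeq using h
    set m : Finset H → ℝ := fun G => ⨅ W : C, ∑ f ∈ G, infDist f ((W : Submodule ℂ H) : Set H) ^ 2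
      with hm
    -- for an assignment σ, the fiber sets
    set Fib : ({x // x ∈ F} → Fin l) → Fin l → Finset H :=
      fun σ j => (Finset.univ.filter (fun f : {x // x ∈ F} => σ f = j)).image Subtype.val
      with hFib
    set α : ({x // x ∈ F} → Fin l) → ℝ := fun σ => ∑ j : Fin l, m (Fib σ j) with hα
    -- there is a best assignment
    obtain ⟨σ0, hσ0⟩ := Finite.exists_min α
    set Vstar : Fin l → Submodule ℂ H := fun j => optV (Fib σ0 j) with hVstar
    have hVstarmem : ∀ j, Vstar j ∈ C := fun j => optVmem _
    refine ⟨Vstar, hVstarmem, ?_⟩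
    have hbddtuple : BddBelow (Set.range fun W : {W : Fin l → Submodule ℂ H // ∀ j, W j ∈ C} =>
        ∑ f ∈ F, ⨅ j : Fin l, infDist f ((W : Fin l → Submodule ℂ H) j : Set H) ^ 2) := by
      refine ⟨0, ?_⟩
      rintro x ⟨W, rfl⟩
      exact Finset.sum_nonneg fun f _ => Real.iInf_nonneg fun j => sq_nonneg _
    have hbddC : ∀ G : Finset H, BddBelow (Set.range fun W : C =>
        ∑ f ∈ G, infDist f ((W : Submodule ℂ H) : Set H) ^ 2) := by
      intro G
      refine ⟨0, ?_⟩
      rintro x ⟨W, rfl⟩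
      exact Finset.sum_nonneg fun f _ => sq_nonneg _
    have hbddFin : ∀ (f : H) (W : Fin l → Submodule ℂ H),
        BddBelow (Set.range fun j : Fin l => infDist f (W j : Set H) ^ 2) := by
      intro f W
      refine ⟨0, ?_⟩; rintro x ⟨j, rfl⟩; exact sq_nonneg _
    -- sum over fibers lemma
    have fibsum : ∀ (σ : {x // x ∈ F} → Fin l) (W : Fin l → Submodule ℂ H),
        (∑ j : Fin l, ∑ g ∈ Fib σ j, infDist g (W j : Set H) ^ 2)
          = ∑ f ∈ F.attach, infDist (f : H) (W (σ f) : Set H) ^ 2 := by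
      intro σ W
      have step : ∀ j : Fin l, (∑ g ∈ Fib σ j, infDist g (W j : Set H) ^ 2)
          = ∑ f ∈ Finset.univ.filter (fun f : {x // x ∈ F} => σ f = j),
              infDist (f : H) (W (σ f) : Set H) ^ 2 := by
        intro j
        rw [hFib]
        rw [Finset.sum_image (by intro a _ b _ hab; exact Subtype.ext hab)]
        refine Finset.sum_congr rfl fun f hf => ?_
        have : σ f = j := (Finset.mem_filter.mp hf).2
        rw [this]
      simp_rw [step]
      exact Finset.sum_fiberwise _ _ _
    have cost_eq : ∀ W : Fin l → Submodule ℂ H,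
        (∑ f ∈ F, ⨅ j : Fin l, infDist f (W j : Set H) ^ 2)
          = ∑ f ∈ F.attach, ⨅ j : Fin l, infDist (f : H) (W j : Set H) ^ 2 :=
      fun W => (Finset.sum_attach F _).symm
    -- Claim 1 : e(F, Vstar) ≤ α σ0
    have claim1 : (∑ f ∈ F, ⨅ j : Fin l, infDist f (Vstar j : Set H) ^ 2) ≤ α σ0 := by
      rw [cost_eq]
      calc (∑ f ∈ F.attach, ⨅ j : Fin l, infDist (f : H) (Vstar j : Set H) ^ 2)
          ≤ ∑ f ∈ F.attach, infDist (f : H) (Vstar (σ0 f) : Set H) ^ 2 :=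
            Finset.sum_le_sum fun f _ => ciInf_le (hbddFin _ _) (σ0 f)
        _ = ∑ j : Fin l, ∑ g ∈ Fib σ0 j, infDist g (Vstar j : Set H) ^ 2 :=
            (fibsum σ0 Vstar).symm
        _ = α σ0 := by
            refine Finset.sum_congr rfl fun j _ => ?_
            exact optVeq (Fib σ0 j)
    -- Claim 2 : for every tuple W, α σ0 ≤ e(F, W)
    have claim2 : ∀ W : {W : Fin l → Submodule ℂ H // ∀ j, W j ∈ C},
        α σ0 ≤ ∑ f ∈ F, ⨅ j : Fin l, infDist f ((W : Fin l → Submodule ℂ H) j : Set H) ^ 2 := by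
      rintro ⟨W, hW⟩
      -- pick for each f an index achieving the min
      have hch : ∀ f : {x // x ∈ F}, ∃ j : Fin l,
          infDist (f : H) (W j : Set H) ^ 2
            = ⨅ j : Fin l, infDist (f : H) (W j : Set H) ^ 2 :=
        fun f => exists_eq_ciInf_of_finite
      choose σ hσ using hch
      calc α σ0 ≤ α σ := hσ0 σ
        _ ≤ ∑ j : Fin l, ∑ g ∈ Fib σ j, infDist g (W j : Set H) ^ 2 := by
            refine Finset.sum_le_sum fun j _ => ?_
            exact ciInf_le (hbddC _) (⟨W j, hW j⟩ : C)
        _ = ∑ f ∈ F.attach, infDist (f : H) (W (σ f) : Set H) ^ 2 := fibsum σ W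
        _ = ∑ f ∈ F.attach, ⨅ j : Fin l, infDist (f : H) (W j : Set H) ^ 2 :=
            Finset.sum_congr rfl fun f _ => hσ f
        _ = ∑ f ∈ F, ⨅ j : Fin l, infDist f (W j : Set H) ^ 2 := (cost_eq W).symm
    have hne : Nonempty {W : Fin l → Submodule ℂ H // ∀ j, W j ∈ C} :=
      ⟨⟨fun _ => hCne.choose, fun _ => hCne.choose_spec⟩⟩
    apply le_antisymm
    · exact claim1.trans (le_ciInf claim2)
    · exact ciInf_le hbddtuple (⟨Vstar, hVstarmem⟩ : {W : Fin l → Submodule ℂ H // ∀ j, W j ∈ C})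
end

section
/- Let H be a separable Hilbert space and let 𝒞 ⊆ B(H) be a set of orthogonal projectors. If 𝒞 is closed in the weak operator topology of B(H), then 𝒞⁺ = 𝒞 + P⁺(H) is also closed in the weak operator topology, where P⁺(H) denotes the set of positive (nonnegative self-adjoint) bounded operators on H. -/
open ContinuousLinearMap

noncomputable section

variable {H : Type*} [NormedAddCommGroup H] [InnerProductSpace ℂ H] [CompleteSpace H]

/-- `P` is an orthogonal projector: self-adjoint and idempotent. -/
def IsOrthoProjector (P : H →L[ℂ] H) : Prop :=
  IsSelfAdjoint P ∧ P ∘L P = P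

/-- The Minkowski sum `S⁺ = S + P⁺(H)` of a set of operators with the positive operators. -/
def plusPos (S : Set (H →L[ℂ] H)) : Set (H →L[ℂ] H) :=
  {T | ∃ Q ∈ S, ∃ N : H →L[ℂ] H, N.IsPositive ∧ T = Q + N}

section Aux

open ContinuousLinearMapWOT InnerProductSpace
open scoped InnerProductSpace Topology

/-- The linear equivalence `E →L[𝕜] F ≃ₗ E →WOT[𝕜] F`. -/
def ContinuousLinearMap.toWOT (𝕜 E F : Type*) [NormedField 𝕜] [NormedAddCommGroup E]
    [NormedSpace 𝕜 E] [NormedAddCommGroup F] [NormedSpace 𝕜 F] :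
    (E →L[𝕜] F) ≃ₗ[𝕜] (E →WOT[𝕜] F) :=
  (ContinuousLinearMapWOT.linearEquiv 𝕜).symm

private lemma ortho_norm_le' (P : H →L[ℂ] H) (h : IsOrthoProjector P) : ‖P‖ ≤ 1 := by
  refine ContinuousLinearMap.opNorm_le_bound _ zero_le_one fun x => ?_
  rw [one_mul]
  have hsym := (ContinuousLinearMap.isSelfAdjoint_iff_isSymmetric.mp h.1)
  have hPP : P (P x) = P x := by
    conv_rhs => rw [← h.2]
    rfl
  have h1 : ⟪P x, P x⟫_ℂ = ⟪x, P x⟫_ℂ := by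
    calc ⟪P x, P x⟫_ℂ = ⟪x, P (P x)⟫_ℂ := hsym x (P x)
    _ = ⟪x, P x⟫_ℂ := by rw [hPP]
  have h2 : ‖P x‖ ^ 2 ≤ ‖x‖ * ‖P x‖ := by
    calc ‖P x‖ ^ 2 = RCLike.re ⟪P x, P x⟫_ℂ := (inner_self_eq_norm_sq _).symm
    _ = RCLike.re ⟪x, P x⟫_ℂ := by rw [h1]
    _ ≤ ‖⟪x, P x⟫_ℂ‖ := RCLike.re_le_norm _
    _ ≤ ‖x‖ * ‖P x‖ := norm_inner_le_norm _ _
  nlinarith [norm_nonneg (P x), norm_nonneg x]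

private lemma wot_ball_compact' :
    IsCompact ((ContinuousLinearMap.toWOT ℂ H H) '' {T : H →L[ℂ] H | ‖T‖ ≤ 1}) := by
  have hemb : Topology.IsEmbedding (inducingFn (RingHom.id ℂ) H H) := isEmbedding_inducingFn
  rw [hemb.isCompact_iff]
  set e := inducingFn (RingHom.id ℂ) H H with he
  set K : Set (H × (H →L[ℂ] ℂ) → ℂ) :=
    Set.pi Set.univ fun p => Metric.closedBall 0 (‖p.2‖ * ‖p.1‖) with hK
  set Z1 : Set (H × (H →L[ℂ] ℂ) → ℂ) :=
    {f | ∀ x x' y, f (x + x', y) = f (x, y) + f (x', y)} with hZ1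
  set Z2 : Set (H × (H →L[ℂ] ℂ) → ℂ) :=
    {f | ∀ (c : ℂ) x y, f (c • x, y) = c * f (x, y)} with hZ2
  set Z3 : Set (H × (H →L[ℂ] ℂ) → ℂ) :=
    {f | ∀ x y y', f (x, y + y') = f (x, y) + f (x, y')} with hZ3
  set Z4 : Set (H × (H →L[ℂ] ℂ) → ℂ) :=
    {f | ∀ (c : ℂ) x y, f (x, c • y) = c * f (x, y)} with hZ4
  have himg : e '' ((ContinuousLinearMap.toWOT ℂ H H) '' {T : H →L[ℂ] H | ‖T‖ ≤ 1})
      = K ∩ (Z1 ∩ Z2 ∩ Z3 ∩ Z4) := by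
    apply Set.Subset.antisymm
    · rintro g ⟨A, ⟨T, hT, rfl⟩, rfl⟩
      have hg : ∀ p : H × (H →L[ℂ] ℂ), e ((ContinuousLinearMap.toWOT ℂ H H) T) p = p.2 (T p.1) :=
        fun p => rfl
      refine ⟨fun p _ => ?_, ⟨⟨?_, ?_⟩, ?_⟩, ?_⟩
      · rw [Metric.mem_closedBall, dist_zero_right, hg]
        calc ‖p.2 (T p.1)‖ ≤ ‖p.2‖ * ‖T p.1‖ := p.2.le_opNorm _
        _ ≤ ‖p.2‖ * (‖T‖ * ‖p.1‖) := by
            gcongr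
            exact T.le_opNorm _
        _ ≤ ‖p.2‖ * (1 * ‖p.1‖) := by
            gcongr
            exact hT
        _ = ‖p.2‖ * ‖p.1‖ := by ring
      · intro x x' y; simp [hg (x + x', y), hg (x, y), hg (x', y)]
      · intro c x y; simp [hg (c • x, y), hg (x, y)]
      · intro x y y'; simp [hg (x, y + y'), hg (x, y), hg (x, y')]
      · intro c x y; simp [hg (x, c • y), hg (x, y)]
    · rintro f ⟨hKf, ⟨⟨h1, h2⟩, h3⟩, h4⟩
      have hbound : ∀ x y, ‖f (x, y)‖ ≤ ‖y‖ * ‖x‖ := fun x y => by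
        simpa [Metric.mem_closedBall, dist_zero_right] using hKf (x, y) (Set.mem_univ _)
      set D := InnerProductSpace.toDual ℂ H with hD
      have hψ : ∀ x : H, ∃ φ : H →L[ℂ] ℂ, ‖φ‖ ≤ ‖x‖ ∧
          ∀ z, φ z = starRingEnd ℂ (f (x, D z)) := by
        intro x
        refine ⟨LinearMap.mkContinuous
          { toFun := fun z => starRingEnd ℂ (f (x, D z))
            map_add' := fun z z' => by
              rw [map_add D, h3 x (D z) (D z'), map_add]
            map_smul' := fun c z => by
              rw [LinearIsometryEquiv.map_smulₛₗ, h4 (starRingEnd ℂ c) x (D z), map_mul,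
                RCLike.conj_conj, RingHom.id_apply, smul_eq_mul] }
          ‖x‖ (fun z => ?_), ?_, fun z => rfl⟩
        · dsimp only [LinearMap.coe_mk, AddHom.coe_mk]
          rw [RCLike.norm_conj]
          calc ‖f (x, D z)‖ ≤ ‖D z‖ * ‖x‖ := hbound _ _
          _ = ‖x‖ * ‖z‖ := by rw [LinearIsometryEquiv.norm_map, mul_comm]
        · exact LinearMap.mkContinuous_norm_le _ (norm_nonneg x) _
      choose ψ hψnorm hψval using hψ
      have hψadd : ∀ x x', ψ (x + x') = ψ x + ψ x' := by
        intro x x'; ext z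
        rw [ContinuousLinearMap.add_apply, hψval, hψval, hψval, h1 x x' (D z), map_add]
      have hψsmul : ∀ (c : ℂ) x, ψ (c • x) = starRingEnd ℂ c • ψ x := by
        intro c x; ext z
        rw [ContinuousLinearMap.smul_apply, hψval, hψval, h2 c x (D z), map_mul, smul_eq_mul]
      set T : H →L[ℂ] H := LinearMap.mkContinuous
        { toFun := fun x => D.symm (ψ x)
          map_add' := fun x x' => by
            rw [hψadd, map_add]
          map_smul' := fun c x => by
            rw [hψsmul, LinearIsometryEquiv.map_smulₛₗ, RCLike.conj_conj, RingHom.id_apply] }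
        1 (fun x => by
          simp only [LinearMap.coe_mk, AddHom.coe_mk, one_mul]
          rw [LinearIsometryEquiv.norm_map]
          exact hψnorm x) with hT
      have hTval : ∀ x, T x = D.symm (ψ x) := fun x => rfl
      refine ⟨(ContinuousLinearMap.toWOT ℂ H H) T,
        ⟨T, LinearMap.mkContinuous_norm_le _ zero_le_one _, rfl⟩, ?_⟩
      funext p
      obtain ⟨x, y⟩ := p
      show y (T x) = f (x, y)
      have hy : D (D.symm y) = y := D.apply_symm_apply y
      calc y (T x) = (D (D.symm y)) (T x) := by rw [hy]
      _ = ⟪D.symm y, T x⟫_ℂ := toDual_apply_apply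
      _ = starRingEnd ℂ ⟪T x, D.symm y⟫_ℂ := (inner_conj_symm _ _).symm
      _ = starRingEnd ℂ (ψ x (D.symm y)) := by rw [hTval, toDual_symm_apply]
      _ = f (x, D (D.symm y)) := by rw [hψval, RCLike.conj_conj]
      _ = f (x, y) := by rw [hy]
  rw [himg]
  have hKc : IsCompact K := isCompact_univ_pi fun p => isCompact_closedBall _ _
  refine hKc.inter_right ?_
  have c1 : IsClosed Z1 := by
    rw [hZ1]
    simp only [Set.setOf_forall]
    exact isClosed_iInter fun x => isClosed_iInter fun x' => isClosed_iInter fun y =>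
      isClosed_eq (continuous_apply _) ((continuous_apply (x, y)).add (continuous_apply (x', y)))
  have c2 : IsClosed Z2 := by
    rw [hZ2]
    simp only [Set.setOf_forall]
    exact isClosed_iInter fun c => isClosed_iInter fun x => isClosed_iInter fun y =>
      isClosed_eq (continuous_apply _) ((continuous_const).mul (continuous_apply _))
  have c3 : IsClosed Z3 := by
    rw [hZ3]
    simp only [Set.setOf_forall]
    exact isClosed_iInter fun x => isClosed_iInter fun y => isClosed_iInter fun y' =>
      isClosed_eq (continuous_apply _) ((continuous_apply (x, y)).add (continuous_apply (x, y')))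
  have c4 : IsClosed Z4 := by
    rw [hZ4]
    simp only [Set.setOf_forall]
    exact isClosed_iInter fun c => isClosed_iInter fun x => isClosed_iInter fun y =>
      isClosed_eq (continuous_apply _) ((continuous_const).mul (continuous_apply _))
  exact ((c1.inter c2).inter c3).inter c4

private def posSet : Set ℂ := {c | (RCLike.re c : ℂ) = c ∧ 0 ≤ RCLike.re c}

private lemma isClosed_posSet : IsClosed posSet :=
  (isClosed_eq (Complex.continuous_ofReal.comp (RCLike.continuous_re)) continuous_id).inter
    (isClosed_le continuous_const RCLike.continuous_re)

private lemma posSet_conj {c : ℂ} (h : c ∈ posSet) : (starRingEnd ℂ) c ∈ posSet := by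
  obtain ⟨h1, h2⟩ := h
  have hc : (starRingEnd ℂ) c = ((RCLike.re c : ℝ) : ℂ) := by
    conv_lhs => rw [← h1]
    exact Complex.conj_ofReal _
  refine ⟨?_, ?_⟩ <;> rw [hc] <;>
    simp only [RCLike.ofReal_re, RCLike.re_to_complex, Complex.ofReal_re] <;>
    simpa using h2

private lemma isPositive_iff_posSet (N : H →L[ℂ] H) :
    N.IsPositive ↔ ∀ x, ⟪x, N x⟫_ℂ ∈ posSet := by
  rw [ContinuousLinearMap.isPositive_iff_complex]
  constructor
  · intro h x
    rw [← inner_conj_symm]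
    exact posSet_conj ⟨(h x).1, (h x).2⟩
  · intro h x
    have := posSet_conj (h x)
    rw [inner_conj_symm] at this
    exact ⟨this.1, this.2⟩

/-- If a set `C` of orthogonal projectors on a separable Hilbert space is
closed in the weak operator topology, then so is `C⁺ = C + P⁺(H)`. -/
theorem plusPos_wot_closed_of_wot_closed
    [TopologicalSpace.SeparableSpace H]
    (C : Set (H →L[ℂ] H)) (hproj : ∀ P ∈ C, IsOrthoProjector P)
    (hclosed : IsClosed ((ContinuousLinearMapWOT.ofCLM : (H →L[ℂ] H) → _) '' C)) :
    IsClosed ((ContinuousLinearMapWOT.ofCLM : (H →L[ℂ] H) → _) '' plusPos C) := by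
  rcases Set.eq_empty_or_nonempty C with hC | ⟨Qdef, hQdef⟩
  · have : plusPos C = ∅ := by
      ext T
      simp [plusPos, hC]
    simp [this]
  set W := ContinuousLinearMap.toWOT ℂ H H with hW
  set S := W '' plusPos C with hS
  -- the image of `C` is compact
  have hCball : C ⊆ {T : H →L[ℂ] H | ‖T‖ ≤ 1} := fun P hP => ortho_norm_le' P (hproj P hP)
  have hKcomp : IsCompact (W '' C) :=
    wot_ball_compact'.of_isClosed_subset hclosed (Set.image_mono hCball)
  rw [isClosed_iff_clusterPt]
  intro A hA
  -- a choice function extracting the projector part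
  have hch : ∀ B : H →WOT[ℂ] H, B ∈ S →
      ∃ Q, Q ∈ C ∧ ∃ N : H →L[ℂ] H, N.IsPositive ∧ W.symm B = Q + N := by
    rintro B ⟨T, ⟨Q, hQ, N, hN, rfl⟩, rfl⟩
    exact ⟨Q, hQ, N, hN, by rw [LinearEquiv.symm_apply_apply]⟩
  classical
  set q : (H →WOT[ℂ] H) → (H →L[ℂ] H) := fun B =>
    if h : B ∈ S then (hch B h).choose else Qdef with hq
  have hqC : ∀ B, q B ∈ C := by
    intro B
    simp only [hq]
    by_cases h : B ∈ S
    · rw [dif_pos h]; exact (hch B h).choose_spec.1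
    · rw [dif_neg h]; exact hQdef
  have hqN : ∀ B, B ∈ S → ∃ N : H →L[ℂ] H, N.IsPositive ∧ W.symm B = q B + N := by
    intro B h
    simp only [hq]
    rw [dif_pos h]
    exact (hch B h).choose_spec.2
  -- an ultrafilter converging to `A` and containing `S`
  have hFne : Filter.NeBot (𝓝 A ⊓ Filter.principal S) := hA
  set U := Ultrafilter.of (𝓝 A ⊓ Filter.principal S) with hU
  have hUle : (U : Filter (H →WOT[ℂ] H)) ≤ 𝓝 A ⊓ Filter.principal S := Ultrafilter.of_le _
  have hUA : (U : Filter (H →WOT[ℂ] H)) ≤ 𝓝 A := hUle.trans inf_le_left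
  have hUS : S ∈ U := by
    have := hUle.trans inf_le_right
    exact this (Filter.mem_principal_self S)
  -- the projector parts converge (along a sub-ultrafilter) to some `Q₀ ∈ C`
  have hqmap : (U.map (fun B => W (q B)) : Filter (H →WOT[ℂ] H)) ≤ Filter.principal (W '' C) := by
    rw [Filter.le_principal_iff]
    exact Filter.mem_map.mpr (Filter.univ_mem' fun B => ⟨q B, hqC B, rfl⟩)
  obtain ⟨Qlim, hQlimmem, hQlim⟩ := hKcomp.ultrafilter_le_nhds _ hqmap
  obtain ⟨Q₀, hQ₀C, hQ₀⟩ := hQlimmem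
  have hqtend : Filter.Tendsto (fun B => W (q B)) (U : Filter (H →WOT[ℂ] H)) (𝓝 Qlim) := hQlim
  -- the positive parts converge to `A - Qlim`
  have hntend : Filter.Tendsto (fun B => B - W (q B)) (U : Filter (H →WOT[ℂ] H))
      (𝓝 (A - Qlim)) := Filter.Tendsto.sub hUA hqtend
  -- each inner product of the limit lies in `posSet`
  have hkey : ∀ x : H, ⟪x, ((W.symm A : H →L[ℂ] H) - Q₀) x⟫_ℂ ∈ posSet := by
    intro x
    set y : H →L[ℂ] ℂ := InnerProductSpace.toDual ℂ H x with hy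
    have hcont : Filter.Tendsto (fun B : H →WOT[ℂ] H => y ((B - W (q B)) x))
        (U : Filter (H →WOT[ℂ] H)) (𝓝 (y ((A - Qlim) x))) :=
      ((ContinuousLinearMapWOT.continuous_dual_apply x y).tendsto _).comp hntend
    have hev : ∀ᶠ B in (U : Filter (H →WOT[ℂ] H)), y ((B - W (q B)) x) ∈ posSet := by
      refine Filter.eventually_of_mem hUS fun B hB => ?_
      obtain ⟨N, hNpos, hBN⟩ := hqN B hB
      have : (B - W (q B)) x = N x := by
        have h2 : B - W (q B) = W N := by
          calc B - W (q B) = W (W.symm B) - W (q B) := by rw [LinearEquiv.apply_symm_apply]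
          _ = W (W.symm B - q B) := (map_sub W _ _).symm
          _ = W N := by rw [hBN, add_sub_cancel_left]
        rw [h2]; rfl
      rw [this]
      exact (isPositive_iff_posSet N).mp hNpos x
    have hmem : y ((A - Qlim) x) ∈ posSet :=
      isClosed_posSet.mem_of_tendsto hcont hev
    have : (A - Qlim) x = ((W.symm A : H →L[ℂ] H) - Q₀) x := by
      have : A - Qlim = W ((W.symm A : H →L[ℂ] H) - Q₀) := by
        rw [map_sub, LinearEquiv.apply_symm_apply, hQ₀]
      rw [this]; rfl
    rwa [this] at hmem
  -- conclude
  set N₀ : H →L[ℂ] H := (W.symm A : H →L[ℂ] H) - Q₀ with hN₀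
  have hN₀pos : N₀.IsPositive := (isPositive_iff_posSet N₀).mpr hkey
  refine ⟨Q₀ + N₀, ⟨Q₀, hQ₀C, N₀, hN₀pos, rfl⟩, ?_⟩
  rw [hN₀]
  rw [add_sub_cancel]
  exact LinearEquiv.apply_symm_apply W A

end Aux

end
end

section
/- Let H be a Hilbert space of dimension d < ∞ and let 1 ≤ k ≤ d−1. Fix k linearly independent vectors v₁,…,v_k ∈ H and let 𝒞 be the family of all k-dimensional subspaces of H except the subspace span{v₁,…,v_k}. Then 𝒞 satisfies MSAP(k−1) but does not satisfy MSAP(k). In particular MSAP(k−1) is strictly weaker than MSAP(k). -/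
open Metric

noncomputable section

variable {H : Type*} [NormedAddCommGroup H] [InnerProductSpace ℂ H] [CompleteSpace H]

/-- A family of subspaces has MSAP(k): the minimization property for all data sets of
cardinality at most `k`. -/
def MSAPk (C : Set (Submodule ℂ H)) (k : ℕ) : Prop :=
  ∀ F : Finset H, F.card ≤ k → ∃ V ∈ C, (∑ f ∈ F, infDist f (V : Set H) ^ 2) =
    ⨅ W : C, ∑ f ∈ F, infDist f ((W : Submodule ℂ H) : Set H) ^ 2

/-- Any subspace of dimension at most `n ≤ dim H` can be enlarged to a subspace of
dimension exactly `n`. -/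
theorem exists_superspace_finrank_eq [FiniteDimensional ℂ H] :
    ∀ (m : ℕ) (U : Submodule ℂ H) (n : ℕ), Module.finrank ℂ U ≤ n →
      n ≤ Module.finrank ℂ H → n - Module.finrank ℂ U ≤ m →
      ∃ W : Submodule ℂ H, U ≤ W ∧ Module.finrank ℂ W = n := by
  intro m
  induction m with
  | zero => exact fun U n h1 h2 h3 => ⟨U, le_rfl, by omega⟩
  | succ m ih =>
    intro U n h1 h2 h3
    rcases eq_or_lt_of_le h1 with heq | hlt
    · exact ⟨U, le_rfl, heq⟩
    · have hUtop : U ≠ ⊤ := by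
        intro h
        rw [h, finrank_top] at hlt
        omega
      obtain ⟨x, hx⟩ : ∃ x, x ∉ U := by
        by_contra h
        push_neg at h
        exact hUtop (Submodule.eq_top_iff'.2 h)
      have hx0 : x ≠ 0 := fun h => hx (h ▸ U.zero_mem)
      have hxU' : x ∈ U ⊔ Submodule.span ℂ {x} :=
        Submodule.mem_sup_right (Submodule.mem_span_singleton_self x)
      have hle : U < U ⊔ Submodule.span ℂ {x} :=
        lt_of_le_of_ne le_sup_left (fun h => hx (h ▸ hxU'))
      have h1' : Module.finrank ℂ U < Module.finrank ℂ (U ⊔ Submodule.span ℂ {x} : Submodule ℂ H) :=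
        Submodule.finrank_lt_finrank_of_lt hle
      have h2' : Module.finrank ℂ (U ⊔ Submodule.span ℂ {x} : Submodule ℂ H)
          ≤ Module.finrank ℂ U + 1 := by
        calc Module.finrank ℂ (U ⊔ Submodule.span ℂ {x} : Submodule ℂ H)
            ≤ Module.finrank ℂ U + Module.finrank ℂ (Submodule.span ℂ {x}) :=
              Submodule.finrank_add_le_finrank_add_finrank _ _
          _ = Module.finrank ℂ U + 1 := by rw [finrank_span_singleton hx0]
      obtain ⟨W, hW1, hW2⟩ := ih (U ⊔ Submodule.span ℂ {x}) n (by omega) h2 (by omega)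
      exact ⟨W, le_sup_left.trans hW1, hW2⟩

/-- In a Hilbert space of finite dimension `d`, for `1 ≤ k ≤ d - 1` and `k`
linearly independent vectors `v₁, …, v_k`, the family of all `k`-dimensional subspaces other
than `span {v₁, …, v_k}` satisfies MSAP(k-1) but not MSAP(k); in particular MSAP(k-1) is
strictly weaker than MSAP(k). -/
theorem msapk_strictly_stronger
    [FiniteDimensional ℂ H] {d k : ℕ} (hd : Module.finrank ℂ H = d)
    (hk1 : 1 ≤ k) (hkd : k ≤ d - 1)
    (v : Fin k → H) (hv : LinearIndependent ℂ v) :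
    MSAPk {W : Submodule ℂ H | Module.finrank ℂ W = k ∧
        W ≠ Submodule.span ℂ (Set.range v)} (k - 1) ∧
    ¬ MSAPk {W : Submodule ℂ H | Module.finrank ℂ W = k ∧
        W ≠ Submodule.span ℂ (Set.range v)} k := by
  classical
  set C : Set (Submodule ℂ H) := {W : Submodule ℂ H | Module.finrank ℂ W = k ∧
      W ≠ Submodule.span ℂ (Set.range v)} with hCdef
  set Sv : Submodule ℂ H := Submodule.span ℂ (Set.range v) with hSvdef
  have hkd' : k < d := by omega
  have hrange : Module.finrank ℂ Sv = k := by
    rw [hSvdef, finrank_span_eq_card hv, Fintype.card_fin]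
  obtain ⟨w, hw⟩ : ∃ w, w ∉ Sv := by
    by_contra h
    push_neg at h
    have htop : Sv = ⊤ := Submodule.eq_top_iff'.2 h
    rw [htop, finrank_top, hd] at hrange
    omega
  have hw0 : w ≠ 0 := fun h => hw (h ▸ Submodule.zero_mem _)
  have hbdd : ∀ (F : Finset H),
      BddBelow (Set.range fun W : C => ∑ f ∈ F, infDist f ((W : Submodule ℂ H) : Set H) ^ 2) := by
    intro F
    refine ⟨0, ?_⟩
    rintro x ⟨W, rfl⟩
    exact Finset.sum_nonneg fun f _ => sq_nonneg _
  set i0 : Fin k := ⟨0, hk1⟩ with hi0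
  -- key perturbation construction
  have key : ∀ ε : ℝ, 0 < ε → ∃ W ∈ C, (∀ i, i ≠ i0 → v i ∈ W) ∧
      infDist (v i0) (W : Set H) ≤ ε * ‖w‖ := by
    intro ε hε
    set u : Fin k → H := Function.update v i0 (v i0 + (ε : ℂ) • w) with hu
    set W : Submodule ℂ H := Submodule.span ℂ (Set.range u) with hW
    have hui0 : u i0 = v i0 + (ε : ℂ) • w := by simp [hu]
    have hui : ∀ i, i ≠ i0 → u i = v i := by
      intro i hi
      simp [hu, Function.update_of_ne hi]
    have humem : ∀ i, u i ∈ W := fun i => Submodule.subset_span ⟨i, rfl⟩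
    have hvmem : ∀ i, i ≠ i0 → v i ∈ W := fun i hi => (hui i hi) ▸ humem i
    -- finrank W ≤ k
    have hle : Module.finrank ℂ W ≤ k := by
      have := finrank_range_le_card (R := ℂ) u
      rw [Fintype.card_fin] at this
      simpa [Set.finrank, hW] using this
    -- Sv ≤ W ⊔ span{w}
    have hSvle : Sv ≤ W ⊔ Submodule.span ℂ {w} := by
      rw [hSvdef, Submodule.span_le]
      rintro _ ⟨i, rfl⟩
      by_cases hi : i = i0
      · subst hi
        have h1 : u i0 ∈ W ⊔ Submodule.span ℂ {w} := Submodule.mem_sup_left (humem i0)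
        have h2 : (ε : ℂ) • w ∈ W ⊔ Submodule.span ℂ {w} :=
          Submodule.mem_sup_right (Submodule.smul_mem _ _ (Submodule.mem_span_singleton_self w))
        have : v i0 = u i0 - (ε : ℂ) • w := by rw [hui0]; abel
        rw [this]
        exact Submodule.sub_mem _ h1 h2
      · exact Submodule.mem_sup_left (hvmem i hi)
    -- finrank (Sv ⊔ span{w}) ≥ k + 1
    have hlt : Sv < Sv ⊔ Submodule.span ℂ {w} := by
      refine lt_of_le_of_ne le_sup_left (fun h => hw ?_)
      rw [h]
      exact Submodule.mem_sup_right (Submodule.mem_span_singleton_self w)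
    have hk1' : k + 1 ≤ Module.finrank ℂ (Sv ⊔ Submodule.span ℂ {w} : Submodule ℂ H) := by
      have := Submodule.finrank_lt_finrank_of_lt hlt
      omega
    have hk2' : Module.finrank ℂ (Sv ⊔ Submodule.span ℂ {w} : Submodule ℂ H)
        ≤ Module.finrank ℂ (W ⊔ Submodule.span ℂ {w} : Submodule ℂ H) :=
      Submodule.finrank_mono (sup_le (hSvle) le_sup_right)
    have hk3' : Module.finrank ℂ (W ⊔ Submodule.span ℂ {w} : Submodule ℂ H)
        ≤ Module.finrank ℂ W + 1 := by
      calc Module.finrank ℂ (W ⊔ Submodule.span ℂ {w} : Submodule ℂ H)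
          ≤ Module.finrank ℂ W + Module.finrank ℂ (Submodule.span ℂ {w}) :=
            Submodule.finrank_add_le_finrank_add_finrank _ _
        _ = Module.finrank ℂ W + 1 := by rw [finrank_span_singleton hw0]
    have hrk : Module.finrank ℂ W = k := by omega
    -- W ≠ Sv
    have hne : W ≠ Sv := by
      intro h
      have h1 : u i0 ∈ Sv := h ▸ humem i0
      have h2 : v i0 ∈ Sv := Submodule.subset_span ⟨i0, rfl⟩
      have h3 : (ε : ℂ) • w ∈ Sv := by
        have : (ε : ℂ) • w = u i0 - v i0 := by rw [hui0]; abel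
        rw [this]
        exact Submodule.sub_mem _ h1 h2
      have h4 : w ∈ Sv := by
        have hε0 : (ε : ℂ) ≠ 0 := by
          simpa using ne_of_gt hε
        have : w = (ε : ℂ)⁻¹ • ((ε : ℂ) • w) := by
          rw [smul_smul, inv_mul_cancel₀ hε0, one_smul]
        rw [this]
        exact Submodule.smul_mem _ _ h3
      exact hw h4
    refine ⟨W, ⟨hrk, hne⟩, hvmem, ?_⟩
    have hdist : dist (v i0) (u i0) = ε * ‖w‖ := by
      rw [hui0, dist_eq_norm]
      have : v i0 - (v i0 + (ε : ℂ) • w) = -((ε : ℂ) • w) := by abel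
      rw [this, norm_neg, norm_smul, Complex.norm_real, Real.norm_eq_abs, abs_of_pos hε]
    calc infDist (v i0) (W : Set H) ≤ dist (v i0) (u i0) :=
          infDist_le_dist_of_mem (humem i0)
      _ = ε * ‖w‖ := hdist
  constructor
  · -- MSAP(k-1)
    intro F hF
    have hspanF : Module.finrank ℂ (Submodule.span ℂ (F : Set H)) ≤ k - 1 :=
      le_trans (finrank_span_finset_le_card (R := ℂ) F) hF
    set U : Submodule ℂ H := Submodule.span ℂ (F : Set H) ⊔ Submodule.span ℂ {w} with hU
    have hUle : Module.finrank ℂ U ≤ k := by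
      have h1 : Module.finrank ℂ U ≤ Module.finrank ℂ (Submodule.span ℂ (F : Set H))
          + Module.finrank ℂ (Submodule.span ℂ {w}) :=
        Submodule.finrank_add_le_finrank_add_finrank _ _
      rw [finrank_span_singleton hw0] at h1
      omega
    obtain ⟨W, hUW, hWk⟩ := exists_superspace_finrank_eq k U k hUle (by omega) (by omega)
    have hwW : w ∈ W := hUW (Submodule.mem_sup_right (Submodule.mem_span_singleton_self w))
    have hWne : W ≠ Sv := fun h => hw (h ▸ hwW)
    have hWC : W ∈ C := ⟨hWk, hWne⟩
    have hsum0 : (∑ f ∈ F, infDist f (W : Set H) ^ 2) = 0 := by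
      refine Finset.sum_eq_zero fun f hf => ?_
      have : f ∈ W := hUW (Submodule.mem_sup_left (Submodule.subset_span hf))
      rw [infDist_zero_of_mem this]
      norm_num
    refine ⟨W, hWC, ?_⟩
    haveI : Nonempty C := ⟨⟨W, hWC⟩⟩
    have h1 : (⨅ V : C, ∑ f ∈ F, infDist f ((V : Submodule ℂ H) : Set H) ^ 2) ≤ 0 := by
      have := ciInf_le (hbdd F) (⟨W, hWC⟩ : C)
      rwa [hsum0] at this
    have h2 : (0 : ℝ) ≤ ⨅ V : C, ∑ f ∈ F, infDist f ((V : Submodule ℂ H) : Set H) ^ 2 :=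
      le_ciInf fun V => Finset.sum_nonneg fun f _ => sq_nonneg _
    rw [hsum0]
    exact (le_antisymm h1 h2).symm
  · -- ¬ MSAP(k)
    intro hM
    set F : Finset H := Finset.univ.image v with hFdef
    have hcard : F.card = k := by
      rw [hFdef, Finset.card_image_of_injective _ hv.injective, Finset.card_univ,
        Fintype.card_fin]
    obtain ⟨V, hVC, hVeq⟩ := hM F hcard.le
    haveI : Nonempty C := ⟨⟨V, hVC⟩⟩
    have hnonneg : (0 : ℝ) ≤ ⨅ W : C, ∑ f ∈ F, infDist f ((W : Submodule ℂ H) : Set H) ^ 2 :=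
      le_ciInf fun W => Finset.sum_nonneg fun f _ => sq_nonneg _
    have hle : ∀ δ : ℝ, 0 < δ →
        (⨅ W : C, ∑ f ∈ F, infDist f ((W : Submodule ℂ H) : Set H) ^ 2) ≤ δ := by
      intro δ hδ
      set ε : ℝ := Real.sqrt δ / (‖w‖ + 1) with hε
      have hεpos : 0 < ε := div_pos (Real.sqrt_pos.2 hδ) (by positivity)
      obtain ⟨W, hWC, hWmem, hWd⟩ := key ε hεpos
      have hbound : ε * ‖w‖ ≤ Real.sqrt δ := by
        rw [hε, div_mul_eq_mul_div, div_le_iff₀ (by positivity)]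
        nlinarith [Real.sqrt_nonneg δ, norm_nonneg w]
      have hsum : (∑ f ∈ F, infDist f (W : Set H) ^ 2) ≤ δ := by
        rw [hFdef, Finset.sum_image (fun i _ j _ h => hv.injective h)]
        calc (∑ i : Fin k, infDist (v i) (W : Set H) ^ 2)
            ≤ ∑ i : Fin k, (if i = i0 then (ε * ‖w‖) ^ 2 else 0) := by
              refine Finset.sum_le_sum fun i _ => ?_
              by_cases h : i = i0
              · subst h
                simp only [if_pos rfl]
                exact pow_le_pow_left₀ infDist_nonneg hWd 2
              · rw [if_neg h, infDist_zero_of_mem (hWmem i h)]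
                norm_num
          _ = (ε * ‖w‖) ^ 2 := by simp
          _ ≤ Real.sqrt δ ^ 2 :=
              pow_le_pow_left₀ (mul_nonneg hεpos.le (norm_nonneg w)) hbound 2
          _ = δ := Real.sq_sqrt hδ.le
      exact le_trans (ciInf_le (hbdd F) (⟨W, hWC⟩ : C)) hsum
    have hiInf0 : (⨅ W : C, ∑ f ∈ F, infDist f ((W : Submodule ℂ H) : Set H) ^ 2) = 0 := by
      refine le_antisymm ?_ hnonneg
      by_contra h
      push_neg at h
      have := hle _ (half_pos h)
      linarith
    rw [hiInf0] at hVeq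
    have hall : ∀ f ∈ F, infDist f ((V : Submodule ℂ H) : Set H) ^ 2 = 0 :=
      (Finset.sum_eq_zero_iff_of_nonneg (fun f _ => sq_nonneg _)).1 hVeq
    have hVclosed : IsClosed ((V : Submodule ℂ H) : Set H) :=
      Submodule.closed_of_finiteDimensional V
    have hmem : ∀ i : Fin k, v i ∈ V := by
      intro i
      have hfi : v i ∈ F := by
        rw [hFdef]
        exact Finset.mem_image_of_mem v (Finset.mem_univ i)
      have h0 : infDist (v i) ((V : Submodule ℂ H) : Set H) = 0 :=
        (pow_eq_zero_iff two_ne_zero).1 (hall (v i) hfi)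
      exact (hVclosed.mem_iff_infDist_zero ⟨0, V.zero_mem⟩).2 h0
    have hSvV : Sv ≤ V := by
      rw [hSvdef, Submodule.span_le]
      rintro _ ⟨i, rfl⟩
      exact hmem i
    have : Sv = V := Submodule.eq_of_le_of_finrank_le hSvV (by rw [hrange, hVC.1])
    exact hVC.2 this.symm

end
end

section
/- Let H be a real or complex separable Hilbert space and let φ be a linear functional on B(H) that is continuous for the weak operator topology and takes nonnegative values on the set P⁺(H) of positive operators. Then there exists a finite set of vectors F = {f₁,…,f_m} ⊆ H such that φ(A) = Σ_{i=1}^m ⟨A fᵢ, fᵢ⟩ for every A ∈ P⁺(H). -/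
open ContinuousLinearMap
open RCLike

local notation "⟪" x ", " y "⟫" => @inner _ _ _ x y

lemma wot_rep {𝕜 H : Type*} [RCLike 𝕜] [NormedAddCommGroup H] [InnerProductSpace 𝕜 H]
    [CompleteSpace H]
    (φ : (H →WOT[𝕜] H) → ℝ)
    (hadd : ∀ x y, φ (x + y) = φ x + φ y)
    (hsmul : ∀ (c : ℝ) (x : H →WOT[𝕜] H), φ ((c : 𝕜) • x) = c * φ x)
    (hcont : Continuous φ) :
    ∃ (n : ℕ) (z x : Fin n → H), ∀ A : H →L[𝕜] H,
      φ (ContinuousLinearMapWOT.ofCLM A) = ∑ i, re (⟪z i, A (x i)⟫ : 𝕜) := by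
  classical
  have h0 : φ 0 = 0 := by have := hadd 0 0; simp at this; linarith
  -- continuity at 0 gives a seminorm-ball inside the preimage of (-1,1)
  have hnhds : φ ⁻¹' (Set.Ioo (-1 : ℝ) 1) ∈ nhds (0 : H →WOT[𝕜] H) := by
    have : Set.Ioo (-1 : ℝ) 1 ∈ nhds (φ 0) := by
      rw [h0]; exact Ioo_mem_nhds (by norm_num) (by norm_num)
    exact hcont.continuousAt.preimage_mem_nhds this
  obtain ⟨⟨s, r⟩, hr, hball⟩ :=
    (ContinuousLinearMapWOT.withSeminorms (σ := RingHom.id 𝕜) (E := H) (F := H)).hasBasis_zero_ball.mem_iff.mp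
      hnhds
  simp only at hr hball
  -- A vanishing on all pairs in s maps to 0 under φ
  have hker : ∀ A : H →WOT[𝕜] H, (∀ q ∈ s, (q.2 : H →L[𝕜] 𝕜) (A q.1) = 0) → φ A = 0 := by
    intro A hA
    by_contra hne
    have hval : ∀ t : ℝ, |t * φ A| < 1 := by
      intro t
      have hmem : ((t : 𝕜) • A) ∈ (s.sup (ContinuousLinearMapWOT.seminormFamily (RingHom.id 𝕜) H H)).ball 0 r := by
        rw [Seminorm.mem_ball_zero]
        refine Seminorm.finset_sup_apply_lt hr (fun q hq => ?_)
        have : (ContinuousLinearMapWOT.seminormFamily (RingHom.id 𝕜) H H q) ((t : 𝕜) • A)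
            = ‖(q.2 : H →L[𝕜] 𝕜) (((t : 𝕜) • A) q.1)‖ := rfl
        rw [this, ContinuousLinearMapWOT.smul_apply, map_smul, hA q hq]
        simpa using hr
      have := hball hmem
      simp only [Set.mem_preimage, Set.mem_Ioo, hsmul] at this
      rw [abs_lt]; exact this
    have := hval (2 / φ A)
    rw [div_mul_cancel₀ 2 hne] at this
    norm_num at this
  -- pass to restricted scalars to do real linear algebra
  let M := RestrictScalars ℝ 𝕜 (H →WOT[𝕜] H)
  let e := RestrictScalars.addEquiv ℝ 𝕜 (H →WOT[𝕜] H)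
  have hesmul : ∀ (c : ℝ) (A : M), e (c • A) = (c : 𝕜) • e A := by
    intro c A
    rw [RestrictScalars.addEquiv_map_smul, RCLike.algebraMap_eq_ofReal]
  let Φ : M →ₗ[ℝ] ℝ :=
    { toFun := fun A => φ (e A)
      map_add' := fun A B => by show φ (e (A + B)) = _; rw [map_add, hadd]
      map_smul' := fun c A => by simp only [hesmul, hsmul, RingHom.id_apply, smul_eq_mul] }
  let L : (s × Bool) → M →ₗ[ℝ] ℝ := fun i =>
    { toFun := fun A => if i.2 then im ((i.1.1.2 : H →L[𝕜] 𝕜) (e A i.1.1.1))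
        else re ((i.1.1.2 : H →L[𝕜] 𝕜) (e A i.1.1.1))
      map_add' := fun A B => by
        simp only [map_add, ContinuousLinearMapWOT.add_apply]
        split <;> simp
      map_smul' := fun c A => by
        simp only [hesmul, ContinuousLinearMapWOT.smul_apply, map_smul, smul_eq_mul,
          RingHom.id_apply]
        split <;> simp [re_ofReal_mul, im_ofReal_mul] }
  have hsub : (⨅ i, LinearMap.ker (L i)) ≤ LinearMap.ker Φ := by
    intro A hA
    simp only [Submodule.mem_iInf, LinearMap.mem_ker] at hA ⊢
    refine hker (e A) (fun q hq => ?_)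
    have h1 := hA ⟨⟨q, hq⟩, false⟩
    have h2 := hA ⟨⟨q, hq⟩, true⟩
    simp only [L, LinearMap.coe_mk, AddHom.coe_mk, Bool.false_eq_true, if_true, if_false] at h1 h2
    exact RCLike.ext (by simpa using h1) (by simpa using h2)
  have hspan : Φ ∈ Submodule.span ℝ (Set.range L) :=
    @mem_span_of_iInf_ker_le_ker _ ℝ M _ _ (RestrictScalars.module ℝ 𝕜 (H →WOT[𝕜] H)) _ _ _ hsub
  obtain ⟨c, hc⟩ := (Submodule.mem_span_range_iff_exists_fun ℝ).1 hspan
  -- build the vector families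
  let zf : (s × Bool) → H := fun i =>
    if i.2 then (RCLike.I * (c i : 𝕜)) • (InnerProductSpace.toDual 𝕜 H).symm i.1.1.2
      else ((c i : ℝ) : 𝕜) • (InnerProductSpace.toDual 𝕜 H).symm i.1.1.2
  let eqn := Fintype.equivFin (s × Bool)
  refine ⟨Fintype.card (s × Bool), zf ∘ eqn.symm, (fun i => i.1.1.1) ∘ eqn.symm, fun A => ?_⟩
  have key : ∀ A : H →L[𝕜] H, φ (ContinuousLinearMapWOT.ofCLM A)
      = ∑ i : s × Bool, re (⟪zf i, A i.1.1.1⟫ : 𝕜) := by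
    intro A
    have := LinearMap.congr_fun hc (e.symm (ContinuousLinearMapWOT.ofCLM A))
    simp only [LinearMap.coe_sum, Finset.sum_apply, LinearMap.smul_apply, smul_eq_mul] at this
    rw [show φ (ContinuousLinearMapWOT.ofCLM A) = Φ (e.symm (ContinuousLinearMapWOT.ofCLM A))
      from by simp [Φ]]
    rw [← this]
    refine Finset.sum_congr rfl (fun i _ => ?_)
    have happ : (e (e.symm (ContinuousLinearMapWOT.ofCLM A))) i.1.1.1 = A i.1.1.1 := by
      rw [e.apply_symm_apply]; rfl
    simp only [L, zf, LinearMap.coe_mk, AddHom.coe_mk, happ]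
    rcases i with ⟨⟨⟨x, y⟩, hq⟩, b⟩
    cases b
    · simp only [Bool.false_eq_true, if_false]
      rw [inner_smul_left, conj_ofReal, re_ofReal_mul,
        InnerProductSpace.toDual_symm_apply]
    · simp only [if_true]
      have hconj : (starRingEnd 𝕜) (I * ((c (⟨⟨(x,y), hq⟩, true⟩ : s × Bool)) : 𝕜))
          = -(I * ((c (⟨⟨(x,y), hq⟩, true⟩ : s × Bool)) : 𝕜)) := by
        rw [map_mul, conj_I, conj_ofReal]; ring
      rw [inner_smul_left, hconj, neg_mul, mul_assoc, map_neg, I_mul_re, neg_neg,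
        im_ofReal_mul, InnerProductSpace.toDual_symm_apply]
  rw [key A]
  exact (Fintype.sum_equiv eqn.symm _ _ (fun i => rfl)).symm

set_option maxHeartbeats 2000000

/-- Every linear functional on `B(H)` (`H` a real or complex separable Hilbert
space) that is continuous for the weak operator topology and nonnegative on the positive
operators agrees, on the positive operators, with `A ↦ Σᵢ ⟨A fᵢ, fᵢ⟩` for some finite family of
vectors `f₁, …, f_m` in `H`. -/
theorem wot_continuous_positive_functional_eq_vector_states
    {𝕜 H : Type*} [RCLike 𝕜] [NormedAddCommGroup H] [InnerProductSpace 𝕜 H]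
    [CompleteSpace H] [TopologicalSpace.SeparableSpace H]
    (φ : (H →WOT[𝕜] H) → ℝ)
    (hadd : ∀ x y, φ (x + y) = φ x + φ y)
    (hsmul : ∀ (c : ℝ) (x : H →WOT[𝕜] H), φ ((c : 𝕜) • x) = c * φ x)
    (hcont : Continuous φ)
    (hpos : ∀ A : H →L[𝕜] H, A.IsPositive → 0 ≤ φ (ContinuousLinearMapWOT.ofCLM A)) :
    ∃ (m : ℕ) (f : Fin m → H), ∀ A : H →L[𝕜] H, A.IsPositive →
      φ (ContinuousLinearMapWOT.ofCLM A) =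
        ∑ i : Fin m, RCLike.re (inner 𝕜 (A (f i)) (f i) : 𝕜) := by
  classical
  obtain ⟨n, z, x, hrep⟩ := wot_rep φ hadd hsmul hcont
  set V : Submodule 𝕜 H := Submodule.span 𝕜 (Set.range z ∪ Set.range x) with hVdef
  haveI : FiniteDimensional 𝕜 V :=
    FiniteDimensional.span_of_finite 𝕜 ((Set.finite_range z).union (Set.finite_range x))
  have hz : ∀ i, z i ∈ V := fun i =>
    Submodule.subset_span (Set.mem_union_left _ ⟨i, rfl⟩)
  have hx : ∀ i, x i ∈ V := fun i =>
    Submodule.subset_span (Set.mem_union_right _ ⟨i, rfl⟩)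
  let z' : Fin n → V := fun i => ⟨z i, hz i⟩
  let x' : Fin n → V := fun i => ⟨x i, hx i⟩
  let P : H →L[𝕜] V := V.orthogonalProjectionOnto
  let cmp : (H →L[𝕜] H) → (V →L[𝕜] V) := fun A => P ∘L A ∘L V.subtypeL
  -- compression identity
  have hcmp : ∀ (A : H →L[𝕜] H) (v w : V),
      (⟪(v : H), A (w : H)⟫ : 𝕜) = ⟪v, cmp A w⟫ := by
    intro A v w
    have horth : A (w : H) - (V.orthogonalProjectionOnto (A (w : H)) : H) ∈ Vᗮ :=
      Submodule.sub_starProjection_mem_orthogonal (K := V) (A (w : H))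
    have h0 : (⟪(v : H), A (w : H) - (V.orthogonalProjectionOnto (A (w : H)) : H)⟫ : 𝕜) = 0 :=
      (Submodule.mem_orthogonal V _).mp horth (v : H) v.2
    rw [inner_sub_right, sub_eq_zero] at h0
    rw [h0, Submodule.coe_inner]
    rfl
  have hrep' : ∀ A : H →L[𝕜] H,
      φ (ContinuousLinearMapWOT.ofCLM A) = ∑ i, re (⟪z' i, cmp A (x' i)⟫ : 𝕜) := by
    intro A
    rw [hrep A]
    exact Finset.sum_congr rfl fun i _ => by rw [← hcmp A (z' i) (x' i)]
  -- rank one operators are positive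
  let rk : H → (H →L[𝕜] H) := fun u => (innerSL 𝕜 u).smulRight u
  have hrk_apply : ∀ u w, rk u w = (⟪u, w⟫ : 𝕜) • u := fun u w => rfl
  have hrk_pos : ∀ u, (rk u).IsPositive := by
    intro u
    constructor
    · intro a b
      simp only [ContinuousLinearMap.coe_coe, hrk_apply, inner_smul_left, inner_smul_right]
      rw [← inner_conj_symm a u]
      ring
    · intro w
      simp only [ContinuousLinearMap.reApplyInnerSelf, hrk_apply, inner_smul_left]
      rw [RCLike.conj_mul, ← RCLike.ofReal_pow, RCLike.ofReal_re]
      positivity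
  -- the operator T on V
  let T : V →L[𝕜] V := ∑ i, (innerSL 𝕜 (z' i)).smulRight (x' i)
  have hT_apply : ∀ v, T v = ∑ i, (⟪z' i, v⟫ : 𝕜) • x' i := by
    intro v
    simp [T, ContinuousLinearMap.sum_apply]
  -- positivity of the quadratic form of T
  have hq : ∀ v : V, 0 ≤ re (⟪v, T v⟫ : 𝕜) := by
    intro v
    have h1 := hpos (rk (v : H)) (hrk_pos _)
    rw [hrep (rk (v : H))] at h1
    have h2 : ∀ i, (⟪z i, rk (v : H) (x i)⟫ : 𝕜) = ⟪z' i, v⟫ * ⟪v, x' i⟫ := by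
      intro i
      rw [hrk_apply, inner_smul_right]
      rw [show (⟪z i, (v : H)⟫ : 𝕜) = ⟪z' i, v⟫ from (Submodule.coe_inner V (z' i) v).symm,
        show (⟪(v : H), x i⟫ : 𝕜) = ⟪v, x' i⟫ from (Submodule.coe_inner V v (x' i)).symm]
      ring
    have h3 : (⟪v, T v⟫ : 𝕜) = ∑ i, (⟪z i, rk (v : H) (x i)⟫ : 𝕜) := by
      rw [hT_apply, inner_sum]
      refine Finset.sum_congr rfl fun i _ => ?_
      rw [inner_smul_right, h2 i]
    rw [h3, map_sum]
    exact h1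
  -- symmetrization
  let S : V →L[𝕜] V := ((2 : 𝕜)⁻¹) • (T + ContinuousLinearMap.adjoint T)
  have hconj2 : (starRingEnd 𝕜) ((2 : 𝕜)⁻¹) = (2 : 𝕜)⁻¹ := by
    rw [map_inv₀, map_ofNat]
  have hSadj : ContinuousLinearMap.adjoint S = S := by
    rw [show S = ((2 : 𝕜)⁻¹) • (T + ContinuousLinearMap.adjoint T) from rfl,
      LinearIsometryEquiv.map_smulₛₗ, map_add, ContinuousLinearMap.adjoint_adjoint, hconj2,
      add_comm]
  have hSsym : IsSelfAdjoint S := by rwa [IsSelfAdjoint, ContinuousLinearMap.star_eq_adjoint]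
  have hSv : ∀ v : V, (⟪v, S v⟫ : 𝕜) = ((re (⟪v, T v⟫ : 𝕜) : ℝ) : 𝕜) := by
    intro v
    rw [show S v = ((2 : 𝕜)⁻¹) • (T v + ContinuousLinearMap.adjoint T v) from by
      simp [S]]
    have hadj2 : (⟪v, ContinuousLinearMap.adjoint T v⟫ : 𝕜) = (starRingEnd 𝕜) (⟪v, T v⟫ : 𝕜) := by
      rw [ContinuousLinearMap.adjoint_inner_right]
      exact (inner_conj_symm (T v) v).symm
    rw [inner_smul_right, inner_add_right, hadj2, RCLike.add_conj,
      ← mul_assoc, inv_mul_cancel₀ (two_ne_zero), one_mul]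
  -- spectral decomposition of S
  have hSsymL : (S : V →ₗ[𝕜] V).IsSymmetric :=
    ContinuousLinearMap.isSelfAdjoint_iff_isSymmetric.mp hSsym
  let eb := hSsymL.eigenvectorBasis rfl
  let μ := hSsymL.eigenvalues rfl
  have heig : ∀ k, S (eb k) = ((μ k : ℝ) : 𝕜) • eb k := fun k =>
    hSsymL.apply_eigenvectorBasis rfl k
  have hnorm : ∀ k, (⟪eb k, eb k⟫ : 𝕜) = 1 := by
    intro k
    rw [inner_self_eq_norm_sq_to_K, eb.orthonormal.1 k]
    norm_num
  have hμval : ∀ k, (⟪eb k, S (eb k)⟫ : 𝕜) = ((μ k : ℝ) : 𝕜) := by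
    intro k
    rw [heig, inner_smul_right, hnorm, mul_one]
  have hμ : ∀ k, 0 ≤ μ k := by
    intro k
    have h1 := hq (eb k)
    have h2 := hSv (eb k)
    rw [hμval k] at h2
    have h3 : re (⟪eb k, T (eb k)⟫ : 𝕜) = μ k := by
      have := congrArg re h2.symm
      simpa using this
    rwa [h3] at h1
  -- trace machinery (with respect to the eigenbasis)
  let Tr : (V →L[𝕜] V) → 𝕜 := fun B => ∑ k, (⟪eb k, B (eb k)⟫ : 𝕜)
  have hTrT : ∀ B : V →L[𝕜] V, Tr (B ∘L T) = ∑ i, (⟪z' i, B (x' i)⟫ : 𝕜) := by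
    intro B
    have hterm : ∀ k, (⟪eb k, (B ∘L T) (eb k)⟫ : 𝕜)
        = ∑ i, (⟪z' i, eb k⟫ : 𝕜) * ⟪eb k, B (x' i)⟫ := by
      intro k
      rw [ContinuousLinearMap.comp_apply, hT_apply, map_sum, inner_sum]
      exact Finset.sum_congr rfl fun i _ => by rw [map_smul, inner_smul_right]
    simp only [Tr, hterm]
    rw [Finset.sum_comm]
    exact Finset.sum_congr rfl fun i _ => eb.sum_inner_mul_inner (z' i) (B (x' i))
  have hTr_conj : ∀ B : V →L[𝕜] V,
      Tr (ContinuousLinearMap.adjoint B) = (starRingEnd 𝕜) (Tr B) := by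
    intro B
    simp only [Tr, map_sum]
    refine Finset.sum_congr rfl fun k _ => ?_
    rw [ContinuousLinearMap.adjoint_inner_right]
    exact (inner_conj_symm (B (eb k)) (eb k)).symm
  have hTr_comm : ∀ B C : V →L[𝕜] V, Tr (B ∘L C) = Tr (C ∘L B) := by
    have h : ∀ (B C : V →L[𝕜] V) (k : Fin (Module.finrank 𝕜 V)),
        (⟪eb k, (B ∘L C) (eb k)⟫ : 𝕜)
          = ∑ l, (⟪eb k, B (eb l)⟫ : 𝕜) * ⟪eb l, C (eb k)⟫ := by
      intro B C k
      rw [ContinuousLinearMap.comp_apply, ← ContinuousLinearMap.adjoint_inner_left,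
        ← eb.sum_inner_mul_inner]
      exact Finset.sum_congr rfl fun l _ => by rw [ContinuousLinearMap.adjoint_inner_left]
    intro B C
    simp only [Tr, h]
    rw [Finset.sum_comm]
    exact Finset.sum_congr rfl fun k _ => Finset.sum_congr rfl fun l _ => by ring
  -- the final family of vectors
  let f : Fin (Module.finrank 𝕜 V) → H :=
    fun k => ((Real.sqrt (μ k) : ℝ) : 𝕜) • ((eb k : V) : H)
  refine ⟨Module.finrank 𝕜 V, f, fun A hA => ?_⟩
  -- the compression of A is self-adjoint
  have hAadj : ContinuousLinearMap.adjoint (cmp A) = cmp A := by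
    apply ContinuousLinearMap.ext
    intro v
    simp [cmp, P, ContinuousLinearMap.adjoint_comp, Submodule.adjoint_subtypeL,
      Submodule.adjoint_orthogonalProjection, hA.isSelfAdjoint.adjoint_eq]
  -- re Tr((cmp A) T) = re Tr((cmp A) S)
  have hTS : Tr (cmp A ∘L S) = ((re (Tr (cmp A ∘L T)) : ℝ) : 𝕜) := by
    have h1 : Tr (cmp A ∘L ContinuousLinearMap.adjoint T)
        = (starRingEnd 𝕜) (Tr (cmp A ∘L T)) := by
      have he : cmp A ∘L ContinuousLinearMap.adjoint T
          = ContinuousLinearMap.adjoint (T ∘L cmp A) := by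
        rw [ContinuousLinearMap.adjoint_comp, hAadj]
      rw [he, hTr_conj, hTr_comm]
    have h2 : cmp A ∘L S = ((2 : 𝕜)⁻¹) •
        (cmp A ∘L T + cmp A ∘L ContinuousLinearMap.adjoint T) := by
      apply ContinuousLinearMap.ext
      intro v
      simp [S, ContinuousLinearMap.comp_apply]
    have hTr_lin : Tr (((2 : 𝕜)⁻¹) •
          (cmp A ∘L T + cmp A ∘L ContinuousLinearMap.adjoint T))
        = (2 : 𝕜)⁻¹ * (Tr (cmp A ∘L T) + Tr (cmp A ∘L ContinuousLinearMap.adjoint T)) := by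
      simp only [Tr, ContinuousLinearMap.smul_apply, ContinuousLinearMap.add_apply,
        inner_smul_right, inner_add_right]
      rw [← Finset.sum_add_distrib, Finset.mul_sum]
    rw [h2, hTr_lin, h1, RCLike.add_conj, ← mul_assoc, inv_mul_cancel₀ (two_ne_zero), one_mul]
  -- Tr((cmp A) S) in terms of the eigenvalues
  have hTrS : Tr (cmp A ∘L S) = ∑ k, ((μ k : ℝ) : 𝕜) * ⟪eb k, cmp A (eb k)⟫ := by
    simp only [Tr]
    refine Finset.sum_congr rfl fun k _ => ?_
    rw [ContinuousLinearMap.comp_apply, heig, map_smul, inner_smul_right]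
  -- the right-hand side terms
  have hfk : ∀ k, re (⟪A (f k), f k⟫ : 𝕜) = μ k * re (⟪eb k, cmp A (eb k)⟫ : 𝕜) := by
    intro k
    have h1 : (⟪A (f k), f k⟫ : 𝕜) = (starRingEnd 𝕜) (⟪f k, A (f k)⟫ : 𝕜) :=
      (inner_conj_symm (A (f k)) (f k)).symm
    have h2 : (⟪f k, A (f k)⟫ : 𝕜)
        = ((μ k : ℝ) : 𝕜) * ⟪((eb k : V) : H), A ((eb k : V) : H)⟫ := by
      simp only [f, map_smul, inner_smul_left, inner_smul_right, conj_ofReal]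
      rw [← mul_assoc, ← RCLike.ofReal_mul, Real.mul_self_sqrt (hμ k)]
    rw [h1, RCLike.conj_re, h2, re_ofReal_mul, hcmp A (eb k) (eb k)]
  -- put everything together
  rw [hrep' A]
  have hL : ∑ i, re (⟪z' i, cmp A (x' i)⟫ : 𝕜) = re (Tr (cmp A ∘L T)) := by
    rw [hTrT (cmp A), map_sum]
  rw [hL]
  have hre : re (Tr (cmp A ∘L T)) = ∑ k, μ k * re (⟪eb k, cmp A (eb k)⟫ : 𝕜) := by
    have h3 := congrArg re hTS
    rw [RCLike.ofReal_re] at h3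
    rw [← h3, hTrS, map_sum]
    exact Finset.sum_congr rfl fun k _ => re_ofReal_mul _ _
  rw [hre]
  exact (Finset.sum_congr rfl fun k _ => hfk k).symm
end

section
/- Let H be a separable Hilbert space and let k ∈ ℕ. The set of bounded operators on H of rank at most k is closed in the weak operator topology of B(H). -/
open ContinuousLinearMap

/-- For a separable Hilbert space `H` and `k ∈ ℕ`, the set of bounded
operators of rank at most `k` is closed in the weak operator topology on `B(H)`. -/
theorem isClosed_rank_le_wot
    {H : Type*} [NormedAddCommGroup H] [InnerProductSpace ℂ H] [CompleteSpace H]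
    [TopologicalSpace.SeparableSpace H] (k : ℕ) :
    IsClosed {T : H →WOT[ℂ] H |
      LinearMap.rank ((ContinuousLinearMapWOT.toCLM T : H →L[ℂ] H) : H →ₗ[ℂ] H)
        ≤ k} := by
  classical
  set n := k + 1 with hn
  have hset : {T : H →WOT[ℂ] H |
      LinearMap.rank ((ContinuousLinearMapWOT.toCLM T : H →L[ℂ] H) : H →ₗ[ℂ] H)
        ≤ k} =
      ⋂ (x : Fin n → H) (y : Fin n → H),
        {T : H →WOT[ℂ] H |
          Matrix.det (Matrix.of fun i j => (inner ℂ (y i) (T (x j)) : ℂ)) = 0} := by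
    ext T
    set f : H →ₗ[ℂ] H :=
      ((ContinuousLinearMapWOT.toCLM T : H →L[ℂ] H) : H →ₗ[ℂ] H) with hf
    have hTapp : ∀ v : H, T v = f v := fun v => rfl
    simp only [Set.mem_setOf_eq, Set.mem_iInter]
    constructor
    · intro hrank x y
      -- the vectors f (x j) are linearly dependent since rank f ≤ k < n
      have hdep : ¬ LinearIndependent ℂ (fun j : Fin n => f (x j)) := by
        intro hind
        have hmem : ∀ j, f (x j) ∈ LinearMap.range f := fun j => ⟨x j, rfl⟩
        have hind' : LinearIndependent ℂ
            (fun j : Fin n => (⟨f (x j), hmem j⟩ : LinearMap.range f)) :=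
          LinearIndependent.of_comp (LinearMap.range f).subtype hind
        have h2 : (n : Cardinal) ≤ LinearMap.rank f := by
          simpa using hind'.cardinal_lift_le_rank
        have : (n : Cardinal) ≤ (k : Cardinal) := h2.trans hrank
        have := Nat.cast_le.mp this
        omega
      obtain ⟨c, hsum, j₀, hc⟩ := Fintype.not_linearIndependent_iff.mp hdep
      rw [← Matrix.exists_mulVec_eq_zero_iff]
      refine ⟨c, fun h => hc (by simp [h]), ?_⟩
      funext i
      have : (∑ j, c j • f (x j)) = 0 := hsum
      calc (Matrix.of fun i j => (inner ℂ (y i) (T (x j)) : ℂ)).mulVec c i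
          = ∑ j, (inner ℂ (y i) (f (x j)) : ℂ) * c j := by
            simp [Matrix.mulVec, dotProduct, hTapp]
        _ = inner ℂ (y i) (∑ j, c j • f (x j)) := by
            rw [inner_sum]; congr 1; funext j; rw [inner_smul_right]; ring
        _ = 0 := by rw [this, inner_zero_right]
    · intro hdet
      by_contra hrank
      push_neg at hrank
      have hle : (n : Cardinal) ≤ LinearMap.rank f := by
        have h1 : Order.succ ((k : Cardinal)) ≤ LinearMap.rank f :=
          Order.succ_le_of_lt hrank
        calc (n : Cardinal) = (k : Cardinal) + 1 := by push_cast [hn]; ring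
          _ ≤ Order.succ ((k : Cardinal)) := Cardinal.add_one_le_succ _
          _ ≤ _ := h1
      obtain ⟨s, hcard, hind⟩ := LinearMap.le_rank_iff_exists_linearIndependent_finset.mp hle
      set e : Fin n ≃ (s : Set H) :=
        ((s.equivFinOfCardEq hcard).trans (finCongr rfl)).symm with he
      set x : Fin n → H := fun j => (e j : H) with hx
      have hindv : LinearIndependent ℂ (fun j : Fin n => f (x j)) := by
        have := (linearIndependent_equiv e).mpr hind
        exact this
      set v : Fin n → H := fun j => f (x j) with hv
      have h0 := hdet x v
      rw [← Matrix.exists_mulVec_eq_zero_iff] at h0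
      obtain ⟨c, hc0, hc⟩ := h0
      set w : H := ∑ j, c j • v j with hw
      have hvw : ∀ i, (inner ℂ (v i) w : ℂ) = 0 := by
        intro i
        have := congrFun hc i
        calc (inner ℂ (v i) w : ℂ) = ∑ j, (inner ℂ (v i) (v j) : ℂ) * c j := by
              rw [hw, inner_sum]; congr 1; funext j; rw [inner_smul_right]; ring
          _ = (Matrix.of fun i j => (inner ℂ (v i) (T (x j)) : ℂ)).mulVec c i := by
              simp [Matrix.mulVec, dotProduct, hTapp, hv]
          _ = 0 := this
      have hww : (inner ℂ w w : ℂ) = 0 := by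
        nth_rewrite 1 [hw]
        rw [sum_inner]
        exact Finset.sum_eq_zero fun i _ => by rw [inner_smul_left, hvw i, mul_zero]
      have hw0 : w = 0 := inner_self_eq_zero.mp hww
      exact hc0 (funext (Fintype.linearIndependent_iff.mp hindv c (hw.symm.trans hw0)))
  rw [hset]
  refine isClosed_iInter fun x => isClosed_iInter fun y => ?_
  have hcont : Continuous fun T : H →WOT[ℂ] H =>
      Matrix.det (Matrix.of fun i j => (inner ℂ (y i) (T (x j)) : ℂ)) := by
    refine Continuous.matrix_det ?_
    refine continuous_matrix fun i j => ?_
    exact ContinuousLinearMapWOT.continuous_dual_apply (x j) (innerSL ℂ (y i))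
  exact isClosed_eq hcont continuous_const
end

section
/- Let H be an infinite-dimensional separable Hilbert space and let Π_k denote the set of orthogonal projectors on H of rank k. Then the closure of Π_k in the weak operator topology equals the set of positive self-adjoint operators of norm at most 1 and of rank at most k. -/
open ContinuousLinearMap Filter
open scoped InnerProductSpace ComplexConjugate Topology

set_option linter.unusedSectionVars false
set_option maxHeartbeats 1600000

noncomputable section

variable {H : Type*} [NormedAddCommGroup H] [InnerProductSpace ℂ H] [CompleteSpace H]

/-- The rank of a bounded operator, as a cardinal. -/
noncomputable def opRank (T : H →L[ℂ] H) : Cardinal :=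
  LinearMap.rank (T : H →ₗ[ℂ] H)

namespace AuxProj

/-! ### Generalities -/

lemma sq_helper {a b : ℝ} (ha : 0 ≤ a) (hb : 0 ≤ b) (h : a ^ 2 ≤ b * a) : a ≤ b := by
  rcases eq_or_lt_of_le ha with h0 | h0
  · nlinarith
  · nlinarith

lemma symm_apply {P : H →L[ℂ] H} (hsa : IsSelfAdjoint P) (x y : H) :
    ⟪P x, y⟫_ℂ = ⟪x, P y⟫_ℂ :=
  (ContinuousLinearMap.isSelfAdjoint_iff_isSymmetric.mp hsa) x y

lemma norm_le_one_iff (T : H →L[ℂ] H) :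
    ‖T‖ ≤ 1 ↔ ∀ x y : H, ‖⟪y, T x⟫_ℂ‖ ≤ ‖x‖ * ‖y‖ := by
  constructor
  · intro h x y
    calc ‖⟪y, T x⟫_ℂ‖ ≤ ‖y‖ * ‖T x‖ := norm_inner_le_norm _ _
      _ ≤ ‖y‖ * (‖T‖ * ‖x‖) := by gcongr; exact T.le_opNorm x
      _ ≤ ‖y‖ * (1 * ‖x‖) := by gcongr
      _ = ‖x‖ * ‖y‖ := by ring
  · intro h
    refine T.opNorm_le_bound zero_le_one fun x => ?_
    rw [one_mul]
    refine sq_helper (norm_nonneg _) (norm_nonneg _) ?_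
    calc ‖T x‖ ^ 2 = Complex.re ⟪T x, T x⟫_ℂ := (inner_self_eq_norm_sq (𝕜 := ℂ) (T x)).symm
      _ ≤ ‖⟪T x, T x⟫_ℂ‖ := Complex.re_le_norm _
      _ ≤ ‖x‖ * ‖T x‖ := h x (T x)

/-! ### Orthogonal projectors are positive contractions -/

lemma isOrthoProjector_inner_self {P : H →L[ℂ] H} (hP : IsOrthoProjector P) (z : H) :
    ⟪z, P z⟫_ℂ = ⟪P z, P z⟫_ℂ := by
  conv_lhs => rw [← hP.2]
  rw [ContinuousLinearMap.comp_apply]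
  exact (symm_apply hP.1 z (P z)).symm

lemma isOrthoProjector_norm_le {P : H →L[ℂ] H} (hP : IsOrthoProjector P) (z : H) :
    ‖P z‖ ≤ ‖z‖ := by
  refine sq_helper (norm_nonneg _) (norm_nonneg _) ?_
  have h1 : (‖P z‖ : ℝ) ^ 2 = Complex.re ⟪P z, P z⟫_ℂ := (inner_self_eq_norm_sq (𝕜 := ℂ) _).symm
  calc ‖P z‖ ^ 2 = Complex.re ⟪z, P z⟫_ℂ := by rw [h1, isOrthoProjector_inner_self hP]
    _ ≤ ‖⟪z, P z⟫_ℂ‖ := Complex.re_le_norm _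
    _ ≤ ‖z‖ * ‖P z‖ := norm_inner_le_norm _ _

lemma isOrthoProjector_isPositive {P : H →L[ℂ] H} (hP : IsOrthoProjector P) :
    P.IsPositive := by
  refine ⟨ContinuousLinearMap.isSelfAdjoint_iff_isSymmetric.mp hP.1, fun x => ?_⟩
  rw [ContinuousLinearMap.reApplyInnerSelf_apply]
  have h2 : ⟪P x, x⟫_ℂ = ⟪P x, P x⟫_ℂ := by
    rw [← inner_conj_symm, isOrthoProjector_inner_self hP, inner_self_conj]
  rw [h2]
  exact inner_self_nonneg

lemma isOrthoProjector_norm_le_one {P : H →L[ℂ] H} (hP : IsOrthoProjector P) : ‖P‖ ≤ 1 :=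
  P.opNorm_le_bound zero_le_one fun x => by
    rw [one_mul]; exact isOrthoProjector_norm_le hP x

/-! ### Finite-rank projections onto the span of an orthonormal family -/

/-- Sum of the rank-one operators `x ↦ ⟪u i, x⟫ • u i`. -/
noncomputable def projOf {m : ℕ} (u : Fin m → H) : H →L[ℂ] H :=
  ∑ i, (innerSL ℂ (u i)).smulRight (u i)

lemma projOf_apply {m : ℕ} (u : Fin m → H) (x : H) :
    projOf u x = ∑ i, ⟪u i, x⟫_ℂ • u i := by
  simp [projOf, ContinuousLinearMap.sum_apply]

lemma projOf_isSelfAdjoint {m : ℕ} (u : Fin m → H) : IsSelfAdjoint (projOf u) := by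
  rw [ContinuousLinearMap.isSelfAdjoint_iff_isSymmetric]
  intro x y
  simp only [ContinuousLinearMap.coe_coe, projOf_apply, sum_inner, inner_sum,
    inner_smul_left, inner_smul_right]
  refine Finset.sum_congr rfl fun i _ => ?_
  rw [← inner_conj_symm x (u i)]
  ring

lemma projOf_apply_self {m : ℕ} {u : Fin m → H} (hu : Orthonormal ℂ u) (j : Fin m) :
    projOf u (u j) = u j := by
  rw [projOf_apply]
  rw [orthonormal_iff_ite] at hu
  simp [hu, Finset.sum_ite_eq' Finset.univ j]

lemma projOf_idem {m : ℕ} {u : Fin m → H} (hu : Orthonormal ℂ u) :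
    (projOf u) ∘L (projOf u) = projOf u := by
  ext x
  simp only [ContinuousLinearMap.comp_apply]
  conv_lhs => rw [projOf_apply u x]
  rw [map_sum]
  simp only [map_smul]
  simp_rw [projOf_apply_self hu]
  rw [projOf_apply]

lemma projOf_range {m : ℕ} {u : Fin m → H} (hu : Orthonormal ℂ u) :
    LinearMap.range ((projOf u : H →L[ℂ] H) : H →ₗ[ℂ] H) = Submodule.span ℂ (Set.range u) := by
  apply le_antisymm
  · rintro _ ⟨x, rfl⟩
    simp only [ContinuousLinearMap.coe_coe, projOf_apply]
    exact Submodule.sum_mem _ fun i _ =>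
      Submodule.smul_mem _ _ (Submodule.subset_span ⟨i, rfl⟩)
  · rw [Submodule.span_le]
    rintro _ ⟨j, rfl⟩
    exact ⟨u j, projOf_apply_self hu j⟩

lemma projOf_opRank {m : ℕ} {u : Fin m → H} (hu : Orthonormal ℂ u) :
    opRank (projOf u) = m := by
  rw [opRank, LinearMap.rank, projOf_range hu, rank_span hu.linearIndependent,
    ← Cardinal.lift_inj.{u_1, u_1}]
  simpa using Cardinal.mk_range_eq_of_injective hu.linearIndependent.injective

lemma projOf_isOrthoProjector {m : ℕ} {u : Fin m → H} (hu : Orthonormal ℂ u) :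
    IsOrthoProjector (projOf u) :=
  ⟨projOf_isSelfAdjoint u, projOf_idem hu⟩

/-! ### Rank and determinants -/

lemma rank_le_iff_det (T : H →L[ℂ] H) (k : ℕ) :
    LinearMap.rank (T : H →ₗ[ℂ] H) ≤ k ↔
      ∀ v w : Fin (k+1) → H,
        Matrix.det (Matrix.of fun i j => ⟪w j, T (v i)⟫_ℂ) = 0 := by
  constructor
  · intro h v w
    classical
    have hdep : ¬ LinearIndependent ℂ (fun i => T (v i)) := by
      intro hind
      have hg : LinearIndependent ℂ
          (fun i : Fin (k+1) => (⟨T (v i), LinearMap.mem_range_self _ (v i)⟩ :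
            LinearMap.range (T : H →ₗ[ℂ] H))) := by
        apply LinearIndependent.of_comp (LinearMap.range (T : H →ₗ[ℂ] H)).subtype
        exact hind
      have hle := hg.cardinal_lift_le_rank
      have hle2 : ((k+1 : ℕ) : Cardinal) ≤ LinearMap.rank (T : H →ₗ[ℂ] H) := by
        simpa using hle
      have : ((k+1 : ℕ) : Cardinal) ≤ ((k : ℕ) : Cardinal) := hle2.trans h
      rw [Nat.cast_le] at this
      omega
    obtain ⟨c, hsum, i0, hi0⟩ := Fintype.not_linearIndependent_iff.mp hdep
    rw [← Matrix.exists_vecMul_eq_zero_iff]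
    refine ⟨c, fun hc => hi0 (by rw [hc]; rfl), ?_⟩
    funext j
    simp only [Matrix.vecMul, dotProduct, Matrix.of_apply, Pi.zero_apply]
    calc ∑ i, c i * ⟪w j, T (v i)⟫_ℂ
        = ⟪w j, ∑ i, c i • T (v i)⟫_ℂ := by
          rw [inner_sum]; simp_rw [inner_smul_right]
      _ = 0 := by rw [hsum, inner_zero_right]
  · intro h
    by_contra hrk
    rw [not_le] at hrk
    have hsucc : ((k+1 : ℕ) : Cardinal) ≤ LinearMap.rank (T : H →ₗ[ℂ] H) := by
      push_cast
      exact (Cardinal.add_one_le_succ _).trans (Order.succ_le_of_lt hrk)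
    obtain ⟨f, hf⟩ := exists_linearIndependent_of_le_rank
      (R := ℂ) (M := LinearMap.range (T : H →ₗ[ℂ] H)) hsucc
    set u : Fin (k+1) → H := fun i => (f i : H) with hu
    have hind : LinearIndependent ℂ u := by
      have := hf.map' (LinearMap.range (T : H →ₗ[ℂ] H)).subtype
        (Submodule.ker_subtype _)
      exact this
    have hpre : ∀ i, ∃ x, T x = u i := fun i => (f i).2
    choose v hv using hpre
    have hdet := h v u
    obtain ⟨c, hc0, hcm⟩ := (Matrix.exists_vecMul_eq_zero_iff).mpr hdet
    set s : H := ∑ i, c i • u i with hs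
    have hj : ∀ j, ⟪u j, s⟫_ℂ = 0 := by
      intro j
      have := congrFun hcm j
      simp only [Matrix.vecMul, dotProduct, Matrix.of_apply, Pi.zero_apply] at this
      calc ⟪u j, s⟫_ℂ = ∑ i, c i * ⟪u j, T (v i)⟫_ℂ := by
            rw [hs, inner_sum]
            refine Finset.sum_congr rfl fun i _ => ?_
            rw [inner_smul_right, hv]
        _ = 0 := this
    have hss : s = 0 := by
      have : ⟪s, s⟫_ℂ = 0 := by
        rw [hs]
        rw [sum_inner]
        refine Finset.sum_eq_zero fun j _ => ?_
        rw [inner_smul_left, ← hs, hj, mul_zero]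
      exact inner_self_eq_zero.mp this
    have := Fintype.linearIndependent_iff.mp hind c (by rw [← hs]; exact hss)
    exact hc0 (funext fun i => this i)

/-! ### Closedness in the weak operator topology -/

lemma cont_inner (x y : H) : Continuous fun A : H →WOT[ℂ] H => ⟪y, A x⟫_ℂ :=
  ContinuousLinearMapWOT.continuous_dual_apply x (innerSL ℂ y)

lemma isClosed_target (k : ℕ) :
    IsClosed {A : H →WOT[ℂ] H |
      (∀ x y : H, ⟪y, A x⟫_ℂ = conj ⟪x, A y⟫_ℂ) ∧
      (∀ x : H, 0 ≤ Complex.re ⟪x, A x⟫_ℂ) ∧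
      (∀ x y : H, ‖⟪y, A x⟫_ℂ‖ ≤ ‖x‖ * ‖y‖) ∧
      (∀ v w : Fin (k+1) → H,
        Matrix.det (Matrix.of fun i j => ⟪w j, A (v i)⟫_ℂ) = 0)} := by
  have h1 : IsClosed {A : H →WOT[ℂ] H | ∀ x y : H, ⟪y, A x⟫_ℂ = conj ⟪x, A y⟫_ℂ} := by
    rw [Set.setOf_forall]
    refine isClosed_iInter fun x => ?_
    rw [Set.setOf_forall]
    refine isClosed_iInter fun y => ?_
    exact isClosed_eq (cont_inner x y) (Complex.continuous_conj.comp (cont_inner y x))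
  have h2 : IsClosed {A : H →WOT[ℂ] H | ∀ x : H, 0 ≤ Complex.re ⟪x, A x⟫_ℂ} := by
    rw [Set.setOf_forall]
    refine isClosed_iInter fun x => ?_
    exact isClosed_le continuous_const (Complex.continuous_re.comp (cont_inner x x))
  have h3 : IsClosed {A : H →WOT[ℂ] H | ∀ x y : H, ‖⟪y, A x⟫_ℂ‖ ≤ ‖x‖ * ‖y‖} := by
    rw [Set.setOf_forall]
    refine isClosed_iInter fun x => ?_
    rw [Set.setOf_forall]
    refine isClosed_iInter fun y => ?_
    exact isClosed_le (continuous_norm.comp (cont_inner x y)) continuous_const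
  have h4 : IsClosed {A : H →WOT[ℂ] H | ∀ v w : Fin (k+1) → H,
      Matrix.det (Matrix.of fun i j => ⟪w j, A (v i)⟫_ℂ) = 0} := by
    rw [Set.setOf_forall]
    refine isClosed_iInter fun v => ?_
    rw [Set.setOf_forall]
    refine isClosed_iInter fun w => ?_
    refine isClosed_eq ?_ continuous_const
    exact Continuous.matrix_det <| continuous_matrix fun i j => cont_inner (v i) (w j)
  have heq : {A : H →WOT[ℂ] H |
      (∀ x y : H, ⟪y, A x⟫_ℂ = conj ⟪x, A y⟫_ℂ) ∧
      (∀ x : H, 0 ≤ Complex.re ⟪x, A x⟫_ℂ) ∧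
      (∀ x y : H, ‖⟪y, A x⟫_ℂ‖ ≤ ‖x‖ * ‖y‖) ∧
      (∀ v w : Fin (k+1) → H,
        Matrix.det (Matrix.of fun i j => ⟪w j, A (v i)⟫_ℂ) = 0)} =
      _ ∩ (_ ∩ (_ ∩ _)) := rfl
  rw [heq]
  exact h1.inter (h2.inter (h3.inter h4))

/-- The image of the set of positive contractions with rank at most `k` under `toWOT`. -/
lemma target_image_eq (k : ℕ) :
    (ContinuousLinearMapWOT.ofCLM : (H →L[ℂ] H) → (H →WOT[ℂ] H)) ''
        {T : H →L[ℂ] H | T.IsPositive ∧ ‖T‖ ≤ 1 ∧ opRank T ≤ k} =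
      {A : H →WOT[ℂ] H |
      (∀ x y : H, ⟪y, A x⟫_ℂ = conj ⟪x, A y⟫_ℂ) ∧
      (∀ x : H, 0 ≤ Complex.re ⟪x, A x⟫_ℂ) ∧
      (∀ x y : H, ‖⟪y, A x⟫_ℂ‖ ≤ ‖x‖ * ‖y‖) ∧
      (∀ v w : Fin (k+1) → H,
        Matrix.det (Matrix.of fun i j => ⟪w j, A (v i)⟫_ℂ) = 0)} := by
  ext A
  constructor
  · rintro ⟨T, ⟨hpos, hnorm, hrank⟩, rfl⟩
    have happ : ∀ x : H, ((ContinuousLinearMapWOT.ofCLM : (H →L[ℂ] H) → (H →WOT[ℂ] H)) T) x = T x := fun _ => rfl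
    have hsym := symm_apply hpos.isSelfAdjoint
    refine ⟨?_, ?_, ?_, ?_⟩
    · intro x y
      rw [happ, happ, ← hsym x y, inner_conj_symm]
    · intro x
      rw [happ]
      have h0 := hpos.2 x
      rw [ContinuousLinearMap.reApplyInnerSelf_apply] at h0
      rwa [← inner_conj_symm, Complex.conj_re]
    · intro x y
      rw [happ]
      exact (norm_le_one_iff T).mp hnorm x y
    · intro v w
      have := (rank_le_iff_det T k).mp hrank v w
      simpa only [happ] using this
  · rintro ⟨h1, h2, h3, h4⟩
    set T : H →L[ℂ] H := ContinuousLinearMapWOT.toCLM A with hT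
    have happ : ∀ x : H, A x = T x := fun _ => rfl
    have hsa : IsSelfAdjoint T := by
      rw [ContinuousLinearMap.isSelfAdjoint_iff_isSymmetric]
      intro x y
      have := h1 y x
      rw [happ, happ] at this
      calc ⟪T x, y⟫_ℂ = conj ⟪y, T x⟫_ℂ := (inner_conj_symm _ _).symm
        _ = ⟪x, T y⟫_ℂ := this.symm
    refine ⟨T, ⟨⟨ContinuousLinearMap.isSelfAdjoint_iff_isSymmetric.mp hsa, fun x => ?_⟩, ?_, ?_⟩,
      ContinuousLinearMapWOT.ofCLM_toCLM A⟩
    · rw [ContinuousLinearMap.reApplyInnerSelf_apply]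
      have h0 := h2 x
      rw [happ] at h0
      rwa [← inner_conj_symm, Complex.conj_re] at h0
    · rw [norm_le_one_iff]
      intro x y
      have := h3 x y
      rwa [happ] at this
    · rw [opRank, rank_le_iff_det]
      intro v w
      have := h4 v w
      simpa only [happ] using this

/-! ### An orthonormal sequence orthogonal to a finite-dimensional subspace -/

lemma exists_orthonormal_seq (V : Submodule ℂ H) [FiniteDimensional ℂ V]
    (hinf : ¬ FiniteDimensional ℂ H) :
    ∃ g : ℕ → H, Orthonormal ℂ g ∧ ∀ n, g n ∈ Vᗮ := by
  haveI : CompleteSpace V := FiniteDimensional.complete ℂ V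
  haveI hWc : CompleteSpace (Vᗮ : Submodule ℂ H) :=
    (Submodule.isClosed_orthogonal V).completeSpace_coe
  have hWinf : ¬ FiniteDimensional ℂ (Vᗮ : Submodule ℂ H) := by
    intro hW
    have hsup : V ⊔ Vᗮ = ⊤ := Submodule.sup_orthogonal_of_hasOrthogonalProjection
    haveI : FiniteDimensional ℂ (V ⊔ Vᗮ : Submodule ℂ H) := Submodule.finiteDimensional_sup V Vᗮ
    rw [hsup] at this
    exact hinf (Module.Finite.equiv (Submodule.topEquiv (R := ℂ) (M := H)))
  set W := (Vᗮ : Submodule ℂ H)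
  obtain ⟨w, -, hw, hwmax⟩ :=
    exists_maximal_orthonormal (𝕜 := ℂ) (E := W) (s := (∅ : Set W)) (orthonormal_empty ℂ W)
  have hwinf : w.Infinite := by
    intro hfin
    haveI := hfin.to_subtype
    haveI : FiniteDimensional ℂ (Submodule.span ℂ w) := FiniteDimensional.span_of_finite ℂ hfin
    rw [maximal_orthonormal_iff_orthogonalComplement_eq_bot hw] at hwmax
    have hspan : Submodule.span ℂ w = ⊤ := Submodule.orthogonal_eq_bot_iff.mp hwmax
    rw [hspan] at this
    exact hWinf (Module.Finite.equiv (Submodule.topEquiv (R := ℂ) (M := W)))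
  let f : ℕ ↪ w := hwinf.natEmbedding
  refine ⟨fun n => ((f n : W) : H), ?_, fun n => (f n : W).2⟩
  have horth : Orthonormal ℂ (fun n => (f n : W)) := hw.comp f f.injective
  rw [orthonormal_iff_ite] at horth ⊢
  intro i j
  have := horth i j
  rwa [Submodule.coe_inner] at this

/-! ### The spectral representation of a finite-rank positive contraction -/

lemma exists_spectral (T : H →L[ℂ] H) (hpos : T.IsPositive) (hnorm : ‖T‖ ≤ 1)
    (hfin : FiniteDimensional ℂ (LinearMap.range ((T : H →ₗ[ℂ] H)))) (r : ℕ)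
    (hr : Module.finrank ℂ (LinearMap.range ((T : H →ₗ[ℂ] H))) = r) :
    ∃ (E' : ℕ → H) (μ' : ℕ → ℝ),
      (∀ i, 0 ≤ μ' i) ∧ (∀ i, μ' i ≤ 1) ∧
      (∀ i, E' i ∈ LinearMap.range ((T : H →ₗ[ℂ] H))) ∧
      (∀ i j, i < r → j < r → ⟪E' i, E' j⟫_ℂ = if i = j then 1 else 0) ∧
      (∀ i, r ≤ i → E' i = 0 ∧ μ' i = 0) ∧
      (∀ x, T x = ∑ i ∈ Finset.range r, ((μ' i : ℂ) * ⟪E' i, x⟫_ℂ) • E' i) := by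
  classical
  set V : Submodule ℂ H := LinearMap.range ((T : H →ₗ[ℂ] H)) with hV
  have hsymm : ∀ x y : H, ⟪T x, y⟫_ℂ = ⟪x, T y⟫_ℂ := symm_apply hpos.isSelfAdjoint
  have hVmap : ∀ x ∈ V, (T : H →ₗ[ℂ] H) x ∈ V := fun x _ => LinearMap.mem_range_self _ x
  set Tres : V →ₗ[ℂ] V := (T : H →ₗ[ℂ] H).restrict hVmap with hTres
  have hTcoe : ∀ v : V, ((Tres v : V) : H) = T (v : H) := fun v => rfl
  have hTsym : Tres.IsSymmetric := by
    intro u v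
    rw [Submodule.coe_inner, Submodule.coe_inner, hTcoe, hTcoe]
    exact hsymm _ _
  set e : OrthonormalBasis (Fin r) ℂ V := hTsym.eigenvectorBasis hr with he
  set μ : Fin r → ℝ := hTsym.eigenvalues hr with hμ
  have hTe : ∀ i : Fin r, T ((e i : V) : H) = (μ i : ℂ) • ((e i : V) : H) := by
    intro i
    have h1 := hTsym.apply_eigenvectorBasis hr i
    have h2 := congrArg (Subtype.val : V → H) h1
    rw [hTcoe] at h2
    simpa using h2
  have hEnorm : ∀ i j : Fin r, ⟪((e i : V) : H), ((e j : V) : H)⟫_ℂ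
      = if i = j then 1 else 0 := by
    intro i j
    have := (orthonormal_iff_ite (𝕜 := ℂ)).mp e.orthonormal i j
    rwa [Submodule.coe_inner] at this
  have hEself : ∀ i : Fin r, ⟪((e i : V) : H), ((e i : V) : H)⟫_ℂ = 1 := by
    intro i; rw [hEnorm i i, if_pos rfl]
  have hμeq : ∀ i : Fin r, ⟪((e i : V) : H), T ((e i : V) : H)⟫_ℂ = (μ i : ℂ) := by
    intro i
    rw [hTe i, inner_smul_right, hEself, mul_one]
  have hμnn : ∀ i : Fin r, 0 ≤ μ i := by
    intro i
    have h0 := hpos.2 ((e i : V) : H)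
    rw [ContinuousLinearMap.reApplyInnerSelf_apply] at h0
    rw [← inner_conj_symm] at h0
    rw [hμeq i] at h0
    simpa using h0
  have hEnorm1 : ∀ i : Fin r, ‖((e i : V) : H)‖ = 1 := by
    intro i
    exact e.orthonormal.1 i
  have hμle : ∀ i : Fin r, μ i ≤ 1 := by
    intro i
    have h1 : ‖T ((e i : V) : H)‖ = μ i := by
      rw [hTe i, norm_smul, hEnorm1, mul_one, Complex.norm_real,
        Real.norm_of_nonneg (hμnn i)]
    have h2 := T.le_opNorm ((e i : V) : H)
    rw [h1, hEnorm1, mul_one] at h2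
    exact h2.trans hnorm
  haveI : CompleteSpace V := FiniteDimensional.complete ℂ V
  have hrepf : ∀ x : H, T x = ∑ i : Fin r,
      ((μ i : ℂ) * ⟪((e i : V) : H), x⟫_ℂ) • ((e i : V) : H) := by
    intro x
    obtain ⟨y, hy, z, hz, rfl⟩ := V.exists_add_mem_mem_orthogonal x
    have hTz : T z = 0 := by
      have h1 : ⟪T z, T z⟫_ℂ = 0 := by
        rw [hsymm z (T z)]
        rw [← inner_conj_symm]
        rw [(Submodule.mem_orthogonal V z).mp hz (T (T z))
          (LinearMap.mem_range_self _ (T z))]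
        simp
      exact inner_self_eq_zero.mp h1
    have hEz : ∀ i : Fin r, ⟪((e i : V) : H), z⟫_ℂ = 0 := fun i =>
      (Submodule.mem_orthogonal V z).mp hz _ (e i).2
    set yV : V := ⟨y, hy⟩ with hyV
    have hsum : (∑ i, ⟪e i, yV⟫_ℂ • e i) = yV := by
      conv_rhs => rw [← e.sum_repr yV]
      exact Finset.sum_congr rfl fun i _ => by rw [e.repr_apply_apply]
    have hTy : T y = ∑ i : Fin r, (⟪((e i : V) : H), y⟫_ℂ * (μ i : ℂ)) • ((e i : V) : H) := by
      have h3 : T y = ((Tres yV : V) : H) := rfl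
      rw [h3, ← hsum, map_sum, Submodule.coe_sum]
      refine Finset.sum_congr rfl fun i _ => ?_
      rw [LinearMap.map_smul]
      have h4 : ((Tres (e i) : V) : H) = (μ i : ℂ) • ((e i : V) : H) := by
        rw [hTcoe]; exact hTe i
      calc (((⟪e i, yV⟫_ℂ • Tres (e i) : V)) : H)
          = ⟪e i, yV⟫_ℂ • ((Tres (e i) : V) : H) := by rfl
        _ = ⟪e i, yV⟫_ℂ • ((μ i : ℂ) • ((e i : V) : H)) := by rw [h4]
        _ = (⟪((e i : V) : H), y⟫_ℂ * (μ i : ℂ)) • ((e i : V) : H) := by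
            rw [smul_smul, Submodule.coe_inner]
    rw [map_add, hTz, add_zero, hTy]
    refine Finset.sum_congr rfl fun i _ => ?_
    rw [inner_add_right, hEz i, add_zero, mul_comm]
  refine ⟨fun i => if h : i < r then ((e ⟨i, h⟩ : V) : H) else 0,
    fun i => if h : i < r then μ ⟨i, h⟩ else 0, ?_, ?_, ?_, ?_, ?_, ?_⟩
  · intro i; by_cases h : i < r <;> simp [h, hμnn]
  · intro i; by_cases h : i < r <;> simp [h, hμle]
  · intro i; by_cases h : i < r
    · simp only [dif_pos h]; exact (e ⟨i, h⟩).2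
    · simp only [dif_neg h]; exact V.zero_mem
  · intro i j hi hj
    simp only [dif_pos hi, dif_pos hj, hEnorm ⟨i, hi⟩ ⟨j, hj⟩, Fin.mk.injEq]
  · intro i hi
    simp [Nat.not_lt.mpr hi]
  · intro x
    rw [hrepf x, ← Fin.sum_univ_eq_sum_range]
    refine Finset.sum_congr rfl fun i _ => ?_
    simp [i.isLt]

end AuxProj

open AuxProj

/-- In an infinite-dimensional separable Hilbert space, the closure in the
weak operator topology of the set of orthogonal projectors of rank `k` is the set of positive
self-adjoint operators of norm at most `1` and rank at most `k`. -/
theorem closure_rank_k_projectors_wot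
    [TopologicalSpace.SeparableSpace H] (hinf : ¬ FiniteDimensional ℂ H) (k : ℕ) :
    closure ((ContinuousLinearMapWOT.ofCLM : (H →L[ℂ] H) → (H →WOT[ℂ] H)) ''
        {P : H →L[ℂ] H | IsOrthoProjector P ∧ opRank P = k}) =
      (ContinuousLinearMapWOT.ofCLM : (H →L[ℂ] H) → (H →WOT[ℂ] H)) ''
        {T : H →L[ℂ] H | T.IsPositive ∧ ‖T‖ ≤ 1 ∧ opRank T ≤ k} := by
  apply Set.Subset.antisymm
  · refine closure_minimal ?_ ?_
    · refine Set.image_mono ?_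
      rintro P ⟨hP, hrank⟩
      exact ⟨isOrthoProjector_isPositive hP, isOrthoProjector_norm_le_one hP, le_of_eq hrank⟩
    · rw [target_image_eq]
      exact isClosed_target k
  · rintro A ⟨T, ⟨hpos, hnorm, hrank⟩, rfl⟩
    classical
    set V : Submodule ℂ H := LinearMap.range ((T : H →ₗ[ℂ] H)) with hVdef
    have hrkV : Module.rank ℂ V ≤ (k : Cardinal) := hrank
    haveI hfin : FiniteDimensional ℂ V := by
      have := Module.rank_lt_aleph0_iff.mp (lt_of_le_of_lt hrkV (Cardinal.nat_lt_aleph0 k))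
      exact this
    set r : ℕ := Module.finrank ℂ V with hrdef
    have hrle : r ≤ k := by
      have h1 : (r : Cardinal) ≤ (k : Cardinal) := by
        rw [hrdef, Module.finrank_eq_rank ℂ V]  -- fix if needed
        exact hrkV
      exact_mod_cast h1
    obtain ⟨E', μ', hμ0, hμ1, hEV, hEorm, hEzero, hrep⟩ :=
      exists_spectral T hpos hnorm hfin r rfl
    obtain ⟨g, hg, hgV⟩ := exists_orthonormal_seq V hinf
    -- weak-null property of the orthonormal sequence
    have hweak : ∀ x : H, Tendsto (fun m => ⟪g m, x⟫_ℂ) atTop (𝓝 0) := by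
      intro x
      rw [tendsto_zero_iff_norm_tendsto_zero]
      have hsumm : Summable (fun m => ‖⟪g m, x⟫_ℂ‖ ^ 2) := Orthonormal.inner_products_summable x hg
      have h0 := hsumm.tendsto_atTop_zero
      have h1 : Tendsto (fun m => Real.sqrt (‖⟪g m, x⟫_ℂ‖ ^ 2)) atTop (𝓝 (Real.sqrt 0)) :=
        (Real.continuous_sqrt.tendsto 0).comp h0
      simpa [Real.sqrt_sq (norm_nonneg _)] using h1
    have hweak' : ∀ x : H, Tendsto (fun m => ⟪x, g m⟫_ℂ) atTop (𝓝 0) := by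
      intro x
      rw [tendsto_zero_iff_norm_tendsto_zero]
      have := (tendsto_zero_iff_norm_tendsto_zero).mp (hweak x)
      simpa [norm_inner_symm] using this
    have hEg : ∀ i m, ⟪E' i, g m⟫_ℂ = 0 := fun i m =>
      (Submodule.mem_orthogonal V (g m)).mp (hgV m) (E' i) (hEV i)
    have hgE : ∀ m i, ⟪g m, E' i⟫_ℂ = 0 := fun m i => by
      rw [← inner_conj_symm, hEg, map_zero]
    have hgg := (orthonormal_iff_ite (𝕜 := ℂ)).mp hg
    have hEip : ∀ i j : ℕ, ⟪E' i, E' j⟫_ℂ = if i = j ∧ i < r then 1 else 0 := by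
      intro i j
      by_cases hi : i < r
      · by_cases hj : j < r
        · rw [hEorm i j hi hj]
          by_cases hij : i = j
          · simp [hij, hj]
          · simp [hij]
        · rw [(hEzero j (Nat.le_of_not_lt hj)).1, inner_zero_right]
          have hns : ¬(i = j ∧ i < r) := fun h => hj (h.1 ▸ hi)
          simp [hns]
      · rw [(hEzero i (Nat.le_of_not_lt hi)).1, inner_zero_left]
        simp [hi]
    set u : ℕ → Fin k → H := fun n i =>
      (Real.sqrt (μ' i) : ℂ) • E' i + (Real.sqrt (1 - μ' i) : ℂ) • g (n * k + i) with hudef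
    have hss : ∀ i : ℕ, (Real.sqrt (μ' i) : ℂ) * (Real.sqrt (μ' i) : ℂ) = (μ' i : ℂ) := by
      intro i
      rw [← Complex.ofReal_mul, Real.mul_self_sqrt (hμ0 i)]
    have hss2 : ∀ i : ℕ, (Real.sqrt (1 - μ' i) : ℂ) * (Real.sqrt (1 - μ' i) : ℂ)
        = ((1 : ℝ) - μ' i : ℝ) := by
      intro i
      rw [← Complex.ofReal_mul, Real.mul_self_sqrt (by linarith [hμ1 i])]
    have hinner_uu : ∀ n (i j : Fin k), ⟪u n i, u n j⟫_ℂ =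
        (Real.sqrt (μ' i) : ℂ) * (Real.sqrt (μ' j) : ℂ) * ⟪E' (i : ℕ), E' (j : ℕ)⟫_ℂ
        + (Real.sqrt (1 - μ' i) : ℂ) * (Real.sqrt (1 - μ' j) : ℂ)
          * ⟪g (n * k + i), g (n * k + j)⟫_ℂ := by
      intro n i j
      simp only [hudef, inner_add_left, inner_add_right, inner_smul_left, inner_smul_right,
        Complex.conj_ofReal, hEg, hgE, mul_zero, add_zero, zero_add]
      ring
    have hu : ∀ n, Orthonormal ℂ (u n) := by
      intro n
      rw [orthonormal_iff_ite]
      intro i j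
      rw [hinner_uu n i j, hEip, hgg]
      by_cases h : i = j
      · subst h
        rw [if_pos rfl, if_pos rfl]
        by_cases hir : (i : ℕ) < r
        · rw [if_pos ⟨rfl, hir⟩, mul_one, hss, hss2]
          push_cast
          ring
        · rw [if_neg (fun hcon => hir hcon.2), mul_zero, zero_add, mul_one, hss2]
          rw [(hEzero i (Nat.le_of_not_lt hir)).2]
          norm_num
      · have hvne : (i : ℕ) ≠ (j : ℕ) := fun hc => h (Fin.val_injective hc)
        rw [if_neg h, if_neg (fun hcon => hvne hcon.1),
          if_neg (by omega : ¬(n * k + (i : ℕ) = n * k + (j : ℕ))), mul_zero, mul_zero,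
          add_zero]
    -- the approximating projectors converge to T in WOT
    refine mem_closure_of_tendsto (b := (atTop : Filter ℕ)) (f := fun n => (ContinuousLinearMapWOT.ofCLM : (H →L[ℂ] H) → (H →WOT[ℂ] H))
      (projOf (u n))) ?_ (Eventually.of_forall fun n =>
        ⟨projOf (u n), ⟨projOf_isOrthoProjector (hu n), projOf_opRank (hu n)⟩, rfl⟩)
    rw [ContinuousLinearMapWOT.tendsto_iff_forall_inner_apply_tendsto]
    intro x y
    have hPval : ∀ n, ⟪y, ((ContinuousLinearMapWOT.ofCLM : (H →L[ℂ] H) → (H →WOT[ℂ] H)) (projOf (u n))) x⟫_ℂ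
        = ∑ i : Fin k, ⟪u n i, x⟫_ℂ * ⟪y, u n i⟫_ℂ := by
      intro n
      rw [ContinuousLinearMap.toWOT_apply, projOf_apply, inner_sum]
      exact Finset.sum_congr rfl fun i _ => inner_smul_right _ _ _
    have hTval : ⟪y, ((ContinuousLinearMapWOT.ofCLM : (H →L[ℂ] H) → (H →WOT[ℂ] H)) T) x⟫_ℂ
        = ∑ i : Fin k, (μ' (i : ℕ) : ℂ) * ⟪E' (i : ℕ), x⟫_ℂ * ⟪y, E' (i : ℕ)⟫_ℂ := by
      rw [ContinuousLinearMap.toWOT_apply, hrep x, inner_sum]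
      calc ∑ i ∈ Finset.range r, ⟪y, ((μ' i : ℂ) * ⟪E' i, x⟫_ℂ) • E' i⟫_ℂ
          = ∑ i ∈ Finset.range r, (μ' i : ℂ) * ⟪E' i, x⟫_ℂ * ⟪y, E' i⟫_ℂ :=
            Finset.sum_congr rfl fun i _ => by rw [inner_smul_right]
        _ = ∑ i ∈ Finset.range k, (μ' i : ℂ) * ⟪E' i, x⟫_ℂ * ⟪y, E' i⟫_ℂ := by
            refine Finset.sum_subset (Finset.range_subset_range.mpr hrle) ?_
            intro i _ hir
            rw [Finset.mem_range, not_lt] at hir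
            rw [(hEzero i hir).2]
            norm_num
        _ = ∑ i : Fin k, (μ' (i : ℕ) : ℂ) * ⟪E' (i : ℕ), x⟫_ℂ * ⟪y, E' (i : ℕ)⟫_ℂ :=
            (Fin.sum_univ_eq_sum_range _ k).symm
    simp only [hPval, hTval]
    refine tendsto_finset_sum _ fun i _ => ?_
    have hk1 : Tendsto (fun n => n * k + (i : ℕ)) atTop atTop := by
      refine tendsto_atTop_mono (fun n => ?_) tendsto_id
      calc n = n * 1 := (mul_one n).symm
        _ ≤ n * k := Nat.mul_le_mul_left n i.pos
        _ ≤ n * k + (i : ℕ) := Nat.le_add_right _ _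
    have ha := (hweak x).comp hk1
    have hb := (hweak' y).comp hk1
    have hiu1 : ∀ n, ⟪u n i, x⟫_ℂ = (Real.sqrt (μ' i) : ℂ) * ⟪E' (i : ℕ), x⟫_ℂ
        + (Real.sqrt (1 - μ' i) : ℂ) * ⟪g (n * k + i), x⟫_ℂ := by
      intro n
      simp only [hudef, inner_add_left, inner_smul_left, Complex.conj_ofReal]
    have hiu2 : ∀ n, ⟪y, u n i⟫_ℂ = (Real.sqrt (μ' i) : ℂ) * ⟪y, E' (i : ℕ)⟫_ℂ
        + (Real.sqrt (1 - μ' i) : ℂ) * ⟪y, g (n * k + i)⟫_ℂ := by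
      intro n
      simp only [hudef, inner_add_right, inner_smul_right]
    simp only [hiu1, hiu2]
    have ha2 : Tendsto (fun n : ℕ => (Real.sqrt (μ' i) : ℂ) * ⟪E' (i : ℕ), x⟫_ℂ
        + (Real.sqrt (1 - μ' i) : ℂ) * ⟪g (n * k + i), x⟫_ℂ) atTop
        (𝓝 ((Real.sqrt (μ' i) : ℂ) * ⟪E' (i : ℕ), x⟫_ℂ
          + (Real.sqrt (1 - μ' i) : ℂ) * 0)) :=
      tendsto_const_nhds.add (ha.const_mul _)
    have hb2 : Tendsto (fun n : ℕ => (Real.sqrt (μ' i) : ℂ) * ⟪y, E' (i : ℕ)⟫_ℂ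
        + (Real.sqrt (1 - μ' i) : ℂ) * ⟪y, g (n * k + i)⟫_ℂ) atTop
        (𝓝 ((Real.sqrt (μ' i) : ℂ) * ⟪y, E' (i : ℕ)⟫_ℂ
          + (Real.sqrt (1 - μ' i) : ℂ) * 0)) :=
      tendsto_const_nhds.add (hb.const_mul _)
    have hlim := ha2.mul hb2
    have hprod : ((Real.sqrt (μ' i) : ℂ) * ⟪E' (i : ℕ), x⟫_ℂ
          + (Real.sqrt (1 - μ' i) : ℂ) * 0)
        * ((Real.sqrt (μ' i) : ℂ) * ⟪y, E' (i : ℕ)⟫_ℂ + (Real.sqrt (1 - μ' i) : ℂ) * 0)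
        = (μ' (i : ℕ) : ℂ) * ⟪E' (i : ℕ), x⟫_ℂ * ⟪y, E' (i : ℕ)⟫_ℂ := by
      rw [mul_zero, add_zero, add_zero]
      calc (Real.sqrt (μ' i) : ℂ) * ⟪E' (i : ℕ), x⟫_ℂ
            * ((Real.sqrt (μ' i) : ℂ) * ⟪y, E' (i : ℕ)⟫_ℂ)
          = ((Real.sqrt (μ' i) : ℂ) * (Real.sqrt (μ' i) : ℂ))
            * (⟪E' (i : ℕ), x⟫_ℂ * ⟪y, E' (i : ℕ)⟫_ℂ) := by ring
        _ = (μ' (i : ℕ) : ℂ) * ⟪E' (i : ℕ), x⟫_ℂ * ⟪y, E' (i : ℕ)⟫_ℂ := by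
            rw [hss]; ring
    rw [← hprod]
    exact hlim

end
end
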